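/- arXiv:2009.02234 — 3 statements merged into one kernel-verified Lean document; each statement's English description precedes it below -/
import Mathlib

section
/- Let G1 and G2 be K5-minor-free graphs and let G = G1 #_0 G2 be a 0-sum, so that ℤ^{E(G)} is identified with ℤ^{E(G1)} × ℤ^{E(G2)}. Let W1 and W2 be finite nonempty sets of positive integers, and for i = 1, 2 let S_i ⊆ int(M_{G_i}) be such that int(M_{G_i}) = ⋃_{g ∈ S_i} (g + M_{G_i}) and every element of S_i has last coordinate in W_i. Then every element of int(M_G) lies in (x, y, β) + M_G for some integer β ∈ W1 ∪ W2 with β ≥ max(min W1, min W2) and some x ∈ ℤ^{E(G1)}, y ∈ ℤ^{E(G2)} with (x, β) ∈ int(M_{G1}) and (y, β) ∈ int(M_{G2}); moreover, every such element (x, y, β) lies in int(M_G). -/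
/-! Basic definitions for cut monoids of finite simple graphs. -/

open Classical in
/-- The cut vector of a vertex set `A`, as a function on `Sym2 V`:
value `1` on pairs with exactly one element in `A`, and `0` otherwise. -/
noncomputable def cutVec {V : Type} (A : Set V) : Sym2 V → ℤ :=
  Sym2.lift ⟨fun v w => if ((v ∈ A) ↔ (w ∈ A)) then 0 else 1,
    fun v w => if_congr iff_comm rfl rfl⟩

variable {V : Type}

/-- The generators `(δ_A, 1)` of the cut monoid of `G`. -/
def cutGens (G : SimpleGraph V) : Set ((G.edgeSet → ℤ) × ℤ) :=
  {p | ∃ A : Set V, p = (fun e => cutVec A e.1, 1)}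

/-- The cut monoid `M_G` of a graph `G`. -/
def cutMonoid (G : SimpleGraph V) : AddSubmonoid ((G.edgeSet → ℤ) × ℤ) :=
  AddSubmonoid.closure (cutGens G)

/-- The group `gp(M_G)` generated by the cut monoid. -/
def cutGroup (G : SimpleGraph V) : AddSubgroup ((G.edgeSet → ℤ) × ℤ) :=
  AddSubgroup.closure (cutGens G)

/-- `M_G` is normal: every `x ∈ gp(M_G)` with `n • x ∈ M_G` for some `n ≥ 1` lies in `M_G`. -/
def CutNormal (G : SimpleGraph V) : Prop :=
  ∀ x ∈ cutGroup G, (∃ n : ℕ, 1 ≤ n ∧ n • x ∈ cutMonoid G) → x ∈ cutMonoid G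

/-- `M_G` is seminormal: every `x ∈ gp(M_G)` with `2 • x ∈ M_G` and `3 • x ∈ M_G`
lies in `M_G`. -/
def CutSeminormal (G : SimpleGraph V) : Prop :=
  ∀ x ∈ cutGroup G, 2 • x ∈ cutMonoid G → 3 • x ∈ cutMonoid G → x ∈ cutMonoid G

/-- Generators of the cone of `M_G`: nonnegative real multiples of the `(δ_A, 1)`. -/
noncomputable def cutConeGens (G : SimpleGraph V) : Set ((G.edgeSet → ℝ) × ℝ) :=
  {q | ∃ (c : ℝ) (A : Set V), 0 ≤ c ∧
    q = c • ((fun e => ((cutVec A e.1 : ℤ) : ℝ), (1 : ℝ)))}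

/-- The cone `cone(M_G)`: all finite nonnegative real combinations of the `(δ_A, 1)`. -/
noncomputable def cutCone (G : SimpleGraph V) : Set ((G.edgeSet → ℝ) × ℝ) :=
  (AddSubmonoid.closure (cutConeGens G) : Set ((G.edgeSet → ℝ) × ℝ))

/-- The canonical map from `ℤ^E × ℤ` to `ℝ^E × ℝ`. -/
noncomputable def toRealCut (G : SimpleGraph V) (p : (G.edgeSet → ℤ) × ℤ) :
    (G.edgeSet → ℝ) × ℝ :=
  (fun e => ((p.1 e : ℤ) : ℝ), ((p.2 : ℤ) : ℝ))

/-- `int(M_G)`: elements of `M_G` mapping into the topological interior of `cone(M_G)`. -/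
noncomputable def cutInterior (G : SimpleGraph V) : Set ((G.edgeSet → ℤ) × ℤ) :=
  {p | p ∈ cutMonoid G ∧ toRealCut G p ∈ interior (cutCone G)}

/-- The set of last coordinates `α ∈ ℕ` realized by elements of `int(M_G)`;
its least element is `m(G)`. -/
noncomputable def cutDegrees (G : SimpleGraph V) : Set ℕ :=
  {α | ∃ x : G.edgeSet → ℤ, ((x, (α : ℤ)) : (G.edgeSet → ℤ) × ℤ) ∈ cutInterior G}

/-- `H` is a minor of `G`: branch sets `B u` are nonempty, pairwise disjoint,
induce connected subgraphs, and edges of `H` are witnessed by edges of `G`. -/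
def GraphMinor {W V : Type} (H : SimpleGraph W) (G : SimpleGraph V) : Prop :=
  ∃ B : W → Set V,
    (∀ u, (B u).Nonempty) ∧
    (∀ u v, u ≠ v → Disjoint (B u) (B v)) ∧
    (∀ u, (G.induce (B u)).Connected) ∧
    (∀ u v, H.Adj u v → ∃ a ∈ B u, ∃ b ∈ B v, G.Adj a b)

/-- `G` is `K₅`-minor-free. -/
def K5Free (G : SimpleGraph V) : Prop :=
  ¬ GraphMinor (⊤ : SimpleGraph (Fin 5)) G

/-- `G` is bipartite: vertices split into two parts so every edge joins the parts. -/
def BipartiteG (G : SimpleGraph V) : Prop :=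
  ∃ s : Set V, ∀ ⦃v w⦄, G.Adj v w → ((v ∈ s ∧ w ∉ s) ∨ (w ∈ s ∧ v ∉ s))

/-- `G` has an induced cycle of length `n` (n ≥ 3): an induced-subgraph copy of the
cycle graph of length `n`. -/
def HasInducedCycleLen (G : SimpleGraph V) (n : ℕ) : Prop :=
  3 ≤ n ∧ Nonempty (SimpleGraph.cycleGraph n ↪g G)

/-- `G` contains a triangle. -/
def HasTriangle (G : SimpleGraph V) : Prop :=
  ∃ a b c, G.Adj a b ∧ G.Adj b c ∧ G.Adj a c

/-- `G` is chordal: every induced cycle is a triangle. -/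
def ChordalG (G : SimpleGraph V) : Prop :=
  ∀ n, HasInducedCycleLen G n → n = 3

/-- `G` is bridgeless: every edge lies on some cycle. -/
def BridgelessG (G : SimpleGraph V) : Prop :=
  ∀ e ∈ G.edgeSet, ∃ (v : V) (c : G.Walk v v), c.IsCycle ∧ e ∈ c.edges

/-- `G` is (isomorphic to) a cycle of length `n`. -/
def IsCycleOfLen (G : SimpleGraph V) (n : ℕ) : Prop :=
  3 ≤ n ∧ Nonempty (G ≃g SimpleGraph.cycleGraph n)

/-- `G` is a cycle. -/
def IsCycleGraph (G : SimpleGraph V) : Prop :=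
  ∃ n, IsCycleOfLen G n

/-- `G` is a `0`-sum of `G1` and `G2`: copies of `G1`, `G2` cover `G`,
overlap in exactly one vertex, and every edge comes from `G1` or `G2`. -/
def IsZeroSumDecomp {V1 V2 : Type} (G : SimpleGraph V) (G1 : SimpleGraph V1)
    (G2 : SimpleGraph V2) : Prop :=
  ∃ (f1 : V1 ↪ V) (f2 : V2 ↪ V),
    Set.range f1 ∪ Set.range f2 = Set.univ ∧
    (∃ v, Set.range f1 ∩ Set.range f2 = {v}) ∧
    (∀ a b, G.Adj a b ↔
      ((∃ x y, f1 x = a ∧ f1 y = b ∧ G1.Adj x y) ∨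
       (∃ x y, f2 x = a ∧ f2 y = b ∧ G2.Adj x y)))

/-- `G` is a `1`-sum of `G1` and `G2` along a common edge. -/
def IsOneSumDecomp {V1 V2 : Type} (G : SimpleGraph V) (G1 : SimpleGraph V1)
    (G2 : SimpleGraph V2) : Prop :=
  ∃ (f1 : V1 ↪ V) (f2 : V2 ↪ V) (v w : V),
    v ≠ w ∧
    Set.range f1 ∪ Set.range f2 = Set.univ ∧
    Set.range f1 ∩ Set.range f2 = {v, w} ∧
    (∃ x y, f1 x = v ∧ f1 y = w ∧ G1.Adj x y) ∧
    (∃ x y, f2 x = v ∧ f2 y = w ∧ G2.Adj x y) ∧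
    (∀ a b, G.Adj a b ↔
      ((∃ x y, f1 x = a ∧ f1 y = b ∧ G1.Adj x y) ∨
       (∃ x y, f2 x = a ∧ f2 y = b ∧ G2.Adj x y)))

/-- Ring graphs: obtained, up to adding isolated vertices, from finitely many
(finite) trees and cycles by iterated `0`-sums and `1`-sums. -/
inductive IsRingGraph : {V : Type} → SimpleGraph V → Prop
  | tree {V : Type} (G : SimpleGraph V) :
      Finite V → G.Connected → G.IsAcyclic → IsRingGraph G
  | cycle {V : Type} (G : SimpleGraph V) : IsCycleGraph G → IsRingGraph G
  | zeroSum {V1 V2 V : Type} {G1 : SimpleGraph V1} {G2 : SimpleGraph V2}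
      {G : SimpleGraph V} :
      IsRingGraph G1 → IsRingGraph G2 → IsZeroSumDecomp G G1 G2 → IsRingGraph G
  | oneSum {V1 V2 V : Type} {G1 : SimpleGraph V1} {G2 : SimpleGraph V2}
      {G : SimpleGraph V} :
      IsRingGraph G1 → IsRingGraph G2 → IsOneSumDecomp G G1 G2 → IsRingGraph G
  | addIsolated {V W : Type} {G : SimpleGraph V} {H : SimpleGraph W} (f : V ↪ W) :
      IsRingGraph G → (∀ a b, H.Adj a b ↔ ∃ x y, f x = a ∧ f y = b ∧ G.Adj x y) →
      IsRingGraph H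

/-- An edge of an induced subgraph is an edge of the ambient graph. -/
lemma induce_edge_mem (G : SimpleGraph V) (s : Set V) (e : Sym2 s)
    (he : e ∈ (G.induce s).edgeSet) : e.map Subtype.val ∈ G.edgeSet := by
  induction e using Sym2.ind with
  | _ a b =>
    rw [Sym2.map_pair_eq, SimpleGraph.mem_edgeSet]
    exact he

/-- Restriction of a vector indexed by the edges of `G` to the edges of the
subgraph of `G` induced on `s`. -/
noncomputable def restrictCut (G : SimpleGraph V) (s : Set V) (p : G.edgeSet → ℤ) :
    (G.induce s).edgeSet → ℤ :=
  fun e => p ⟨e.1.map Subtype.val, induce_edge_mem G s e.1 e.2⟩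

section ZeroSumAux

variable {V : Type}

open Classical in
lemma cutVec_pair (A : Set V) (a b : V) :
    cutVec A s(a, b) = if (a ∈ A ↔ b ∈ A) then 0 else 1 := rfl

lemma cutVec_compl (A : Set V) : cutVec Aᶜ = cutVec A := by
  funext e
  induction e using Sym2.ind with
  | _ a b =>
    rw [cutVec_pair, cutVec_pair]
    by_cases h : a ∈ A ↔ b ∈ A
    · rw [if_pos h, if_pos (show a ∈ Aᶜ ↔ b ∈ Aᶜ from not_iff_not.mpr h)]
    · rw [if_neg h, if_neg (show ¬(a ∈ Aᶜ ↔ b ∈ Aᶜ) from fun hc => h (not_iff_not.mp hc))]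

/-- The embedding of edges of an induced subgraph into edges of the graph. -/
def ιe (G : SimpleGraph V) (s : Set V) (e : (G.induce s).edgeSet) : G.edgeSet :=
  ⟨e.1.map Subtype.val, induce_edge_mem G s e.1 e.2⟩

lemma ιe_injective (G : SimpleGraph V) (s : Set V) : Function.Injective (ιe G s) := by
  intro e1 e2 h
  exact Subtype.ext (Sym2.map.injective Subtype.val_injective (congrArg Subtype.val h))

lemma restrictCut_eq (G : SimpleGraph V) (s : Set V) (p : G.edgeSet → ℤ) :
    restrictCut G s p = fun e => p (ιe G s e) := rfl

lemma edge_cover (G : SimpleGraph V) (V1 V2 : Set V)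
    (hedges : ∀ a b, G.Adj a b → ((a ∈ V1 ∧ b ∈ V1) ∨ (a ∈ V2 ∧ b ∈ V2)))
    (e : G.edgeSet) : (∃ e1, ιe G V1 e1 = e) ∨ (∃ e2, ιe G V2 e2 = e) := by
  obtain ⟨E, hE⟩ := e
  induction E using Sym2.ind with
  | _ a b =>
    have hadj : G.Adj a b := hE
    rcases hedges a b hadj with ⟨ha, hb⟩ | ⟨ha, hb⟩
    · left
      refine ⟨⟨s(⟨a, ha⟩, ⟨b, hb⟩), by simpa using hadj⟩, ?_⟩
      apply Subtype.ext
      simp [ιe, Sym2.map_pair_eq]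
    · right
      refine ⟨⟨s(⟨a, ha⟩, ⟨b, hb⟩), by simpa using hadj⟩, ?_⟩
      apply Subtype.ext
      simp [ιe, Sym2.map_pair_eq]

lemma ιe_ne (G : SimpleGraph V) (V1 V2 : Set V) (v : V) (hinter : V1 ∩ V2 = {v})
    (e1 : (G.induce V1).edgeSet) (e2 : (G.induce V2).edgeSet) :
    ιe G V1 e1 ≠ ιe G V2 e2 := by
  obtain ⟨E1, h1⟩ := e1
  obtain ⟨E2, h2⟩ := e2
  intro h
  have hmap : E1.map Subtype.val = E2.map Subtype.val := congrArg Subtype.val h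
  clear h
  induction E1 using Sym2.ind with
  | _ a b =>
  induction E2 using Sym2.ind with
  | _ c d =>
  rw [Sym2.map_pair_eq, Sym2.map_pair_eq, Sym2.eq_iff] at hmap
  have hadj : (G.induce V1).Adj a b := h1
  have hne : (a : V) ≠ (b : V) := by
    intro hab
    exact hadj.ne (Subtype.ext hab)
  have hmem : ∀ x : V1, ((x : V) = (c : V) ∨ (x : V) = (d : V)) → (x : V) = v := by
    intro x hx
    have hx2 : (x : V) ∈ V2 := by rcases hx with h | h <;> rw [h] <;> exact Subtype.prop _
    have : (x : V) ∈ V1 ∩ V2 := ⟨Subtype.prop x, hx2⟩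
    rw [hinter] at this
    exact this
  rcases hmap with ⟨hac, hbd⟩ | ⟨had, hbc⟩
  · exact hne ((hmem a (Or.inl hac)).trans (hmem b (Or.inr hbd)).symm)
  · exact hne ((hmem a (Or.inr had)).trans (hmem b (Or.inl hbc)).symm)

open Classical in
/-- Glue functions on the two edge sets into a function on all edges. -/
noncomputable def glueFun {R : Type} [Zero R] (G : SimpleGraph V) (V1 V2 : Set V)
    (x : (G.induce V1).edgeSet → R) (y : (G.induce V2).edgeSet → R) : G.edgeSet → R :=
  fun e => if h : ∃ e1, ιe G V1 e1 = e then x h.choose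
    else if h2 : ∃ e2, ιe G V2 e2 = e then y h2.choose else 0

lemma glue_apply1 {R : Type} [Zero R] (G : SimpleGraph V) (V1 V2 : Set V)
    (x : (G.induce V1).edgeSet → R) (y : (G.induce V2).edgeSet → R)
    (e1 : (G.induce V1).edgeSet) : glueFun G V1 V2 x y (ιe G V1 e1) = x e1 := by
  have h : ∃ e1', ιe G V1 e1' = ιe G V1 e1 := ⟨e1, rfl⟩
  simp only [glueFun, dif_pos h]
  exact congrArg x (ιe_injective G V1 h.choose_spec)

lemma glue_apply2 {R : Type} [Zero R] (G : SimpleGraph V) (V1 V2 : Set V)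
    (v : V) (hinter : V1 ∩ V2 = {v})
    (x : (G.induce V1).edgeSet → R) (y : (G.induce V2).edgeSet → R)
    (e2 : (G.induce V2).edgeSet) : glueFun G V1 V2 x y (ιe G V2 e2) = y e2 := by
  have h : ¬ ∃ e1, ιe G V1 e1 = ιe G V2 e2 := by
    rintro ⟨e1, he1⟩
    exact ιe_ne G V1 V2 v hinter e1 e2 he1
  have h2 : ∃ e2', ιe G V2 e2' = ιe G V2 e2 := ⟨e2, rfl⟩
  simp only [glueFun, dif_neg h, dif_pos h2]
  exact congrArg y (ιe_injective G V2 h2.choose_spec)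

lemma glue_add {R : Type} [AddMonoid R] (G : SimpleGraph V) (V1 V2 : Set V)
    (x x' : (G.induce V1).edgeSet → R) (y y' : (G.induce V2).edgeSet → R) :
    glueFun G V1 V2 (x + x') (y + y') = glueFun G V1 V2 x y + glueFun G V1 V2 x' y' := by
  funext e
  simp only [glueFun, Pi.add_apply]
  split_ifs <;> simp

lemma glue_zero {R : Type} [Zero R] (G : SimpleGraph V) (V1 V2 : Set V) :
    glueFun G V1 V2 (0 : (G.induce V1).edgeSet → R) (0 : (G.induce V2).edgeSet → R) = 0 := by
  funext e
  simp only [glueFun]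
  split_ifs <;> simp

lemma glue_res {R : Type} [Zero R] (G : SimpleGraph V) (V1 V2 : Set V)
    (hedges : ∀ a b, G.Adj a b → ((a ∈ V1 ∧ b ∈ V1) ∨ (a ∈ V2 ∧ b ∈ V2)))
    (x : G.edgeSet → R) :
    glueFun G V1 V2 (fun e => x (ιe G V1 e)) (fun e => x (ιe G V2 e)) = x := by
  funext e
  simp only [glueFun]
  split_ifs with h h2
  · rw [h.choose_spec]
  · rw [h2.choose_spec]
  · rcases edge_cover G V1 V2 hedges e with h' | h'
    · exact absurd h' h
    · exact absurd h' h2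

lemma glue_cast (G : SimpleGraph V) (V1 V2 : Set V)
    (x : (G.induce V1).edgeSet → ℤ) (y : (G.induce V2).edgeSet → ℤ) :
    glueFun G V1 V2 (fun e => ((x e : ℤ) : ℝ)) (fun e => ((y e : ℤ) : ℝ))
      = fun e => ((glueFun G V1 V2 x y e : ℤ) : ℝ) := by
  funext e
  simp only [glueFun]
  split_ifs <;> simp

end ZeroSumAux
section ZeroSumAux2

variable {V : Type}

lemma mem_glue_set1 (V1 V2 : Set V) (v : V) (hinter : V1 ∩ V2 = {v})
    (hv1 : v ∈ V1) (hv2 : v ∈ V2) (A1 : Set ↥V1) (A2 : Set ↥V2)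
    (hmatch : ((⟨v, hv1⟩ : ↥V1) ∈ A1 ↔ (⟨v, hv2⟩ : ↥V2) ∈ A2)) (a : ↥V1) :
    (a : V) ∈ (Subtype.val '' A1 ∪ Subtype.val '' A2) ↔ a ∈ A1 := by
  constructor
  · rintro (⟨b, hb, hba⟩ | ⟨b, hb, hba⟩)
    · exact Subtype.ext hba ▸ hb
    · have hav : (a : V) = v := by
        have : (a : V) ∈ V1 ∩ V2 := ⟨a.prop, hba ▸ b.prop⟩
        rw [hinter] at this; exact this
      have hbv : b = (⟨v, hv2⟩ : ↥V2) := Subtype.ext (hba.trans hav)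
      have : a = (⟨v, hv1⟩ : ↥V1) := Subtype.ext hav
      rw [this]
      exact hmatch.mpr (hbv ▸ hb)
  · intro h
    exact Or.inl ⟨a, h, rfl⟩

lemma mem_glue_set2 (V1 V2 : Set V) (v : V) (hinter : V1 ∩ V2 = {v})
    (hv1 : v ∈ V1) (hv2 : v ∈ V2) (A1 : Set ↥V1) (A2 : Set ↥V2)
    (hmatch : ((⟨v, hv1⟩ : ↥V1) ∈ A1 ↔ (⟨v, hv2⟩ : ↥V2) ∈ A2)) (a : ↥V2) :
    (a : V) ∈ (Subtype.val '' A1 ∪ Subtype.val '' A2) ↔ a ∈ A2 := by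
  constructor
  · rintro (⟨b, hb, hba⟩ | ⟨b, hb, hba⟩)
    · have hav : (a : V) = v := by
        have : (a : V) ∈ V1 ∩ V2 := ⟨hba ▸ b.prop, a.prop⟩
        rw [hinter] at this; exact this
      have hbv : b = (⟨v, hv1⟩ : ↥V1) := Subtype.ext (hba.trans hav)
      have : a = (⟨v, hv2⟩ : ↥V2) := Subtype.ext hav
      rw [this]
      exact hmatch.mp (hbv ▸ hb)
    · exact Subtype.ext hba ▸ hb
  · intro h
    exact Or.inr ⟨a, h, rfl⟩

lemma cutVec_glue_eq1 (V1 V2 : Set V) (v : V) (hinter : V1 ∩ V2 = {v})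
    (hv1 : v ∈ V1) (hv2 : v ∈ V2) (A1 : Set ↥V1) (A2 : Set ↥V2)
    (hmatch : ((⟨v, hv1⟩ : ↥V1) ∈ A1 ↔ (⟨v, hv2⟩ : ↥V2) ∈ A2)) (E : Sym2 ↥V1) :
    cutVec (Subtype.val '' A1 ∪ Subtype.val '' A2) (E.map Subtype.val) = cutVec A1 E := by
  induction E using Sym2.ind with
  | _ a b =>
    rw [Sym2.map_pair_eq, cutVec_pair, cutVec_pair]
    by_cases h : a ∈ A1 ↔ b ∈ A1
    · rw [if_pos h, if_pos]
      rw [mem_glue_set1 V1 V2 v hinter hv1 hv2 A1 A2 hmatch a,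
        mem_glue_set1 V1 V2 v hinter hv1 hv2 A1 A2 hmatch b]
      exact h
    · rw [if_neg h, if_neg]
      rw [mem_glue_set1 V1 V2 v hinter hv1 hv2 A1 A2 hmatch a,
        mem_glue_set1 V1 V2 v hinter hv1 hv2 A1 A2 hmatch b]
      exact h

lemma cutVec_glue_eq2 (V1 V2 : Set V) (v : V) (hinter : V1 ∩ V2 = {v})
    (hv1 : v ∈ V1) (hv2 : v ∈ V2) (A1 : Set ↥V1) (A2 : Set ↥V2)
    (hmatch : ((⟨v, hv1⟩ : ↥V1) ∈ A1 ↔ (⟨v, hv2⟩ : ↥V2) ∈ A2)) (E : Sym2 ↥V2) :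
    cutVec (Subtype.val '' A1 ∪ Subtype.val '' A2) (E.map Subtype.val) = cutVec A2 E := by
  induction E using Sym2.ind with
  | _ a b =>
    rw [Sym2.map_pair_eq, cutVec_pair, cutVec_pair]
    by_cases h : a ∈ A2 ↔ b ∈ A2
    · rw [if_pos h, if_pos]
      rw [mem_glue_set2 V1 V2 v hinter hv1 hv2 A1 A2 hmatch a,
        mem_glue_set2 V1 V2 v hinter hv1 hv2 A1 A2 hmatch b]
      exact h
    · rw [if_neg h, if_neg]
      rw [mem_glue_set2 V1 V2 v hinter hv1 hv2 A1 A2 hmatch a,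
        mem_glue_set2 V1 V2 v hinter hv1 hv2 A1 A2 hmatch b]
      exact h

lemma cutVec_preimage (s : Set V) (A : Set V) (E : Sym2 ↥s) :
    cutVec A (E.map Subtype.val) = cutVec (Subtype.val ⁻¹' A : Set ↥s) E := by
  induction E using Sym2.ind with
  | _ a b => rw [Sym2.map_pair_eq]; rfl

lemma glue_cutVec (G : SimpleGraph V) (V1 V2 : Set V) (v : V) (hinter : V1 ∩ V2 = {v})
    (hedges : ∀ a b, G.Adj a b → ((a ∈ V1 ∧ b ∈ V1) ∨ (a ∈ V2 ∧ b ∈ V2)))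
    (hv1 : v ∈ V1) (hv2 : v ∈ V2) (A1 : Set ↥V1) (A2 : Set ↥V2)
    (hmatch : ((⟨v, hv1⟩ : ↥V1) ∈ A1 ↔ (⟨v, hv2⟩ : ↥V2) ∈ A2)) :
    glueFun G V1 V2 (fun e => cutVec A1 e.1) (fun e => cutVec A2 e.1)
      = fun e => cutVec (Subtype.val '' A1 ∪ Subtype.val '' A2) e.1 := by
  funext e
  simp only [glueFun]
  split_ifs with h h2
  · have he := congrArg Subtype.val h.choose_spec
    rw [← he]
    exact (cutVec_glue_eq1 V1 V2 v hinter hv1 hv2 A1 A2 hmatch h.choose.1).symm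
  · have he := congrArg Subtype.val h2.choose_spec
    rw [← he]
    exact (cutVec_glue_eq2 V1 V2 v hinter hv1 hv2 A1 A2 hmatch h2.choose.1).symm
  · rcases edge_cover G V1 V2 hedges e with h' | h'
    · exact absurd h' h
    · exact absurd h' h2

lemma glue_gen (G : SimpleGraph V) (V1 V2 : Set V) (v : V) (hinter : V1 ∩ V2 = {v})
    (hedges : ∀ a b, G.Adj a b → ((a ∈ V1 ∧ b ∈ V1) ∨ (a ∈ V2 ∧ b ∈ V2)))
    (hv1 : v ∈ V1) (hv2 : v ∈ V2) (A1 : Set ↥V1) (A2 : Set ↥V2) :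
    ∃ A : Set V, glueFun G V1 V2 (fun e => cutVec A1 e.1) (fun e => cutVec A2 e.1)
      = fun e => cutVec A e.1 := by
  by_cases hm : ((⟨v, hv1⟩ : ↥V1) ∈ A1 ↔ (⟨v, hv2⟩ : ↥V2) ∈ A2)
  · exact ⟨_, glue_cutVec G V1 V2 v hinter hedges hv1 hv2 A1 A2 hm⟩
  · have hm' : ((⟨v, hv1⟩ : ↥V1) ∈ A1 ↔ (⟨v, hv2⟩ : ↥V2) ∈ A2ᶜ) := by
      simp only [Set.mem_compl_iff]; tauto
    refine ⟨Subtype.val '' A1 ∪ Subtype.val '' A2ᶜ, ?_⟩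
    rw [← cutVec_compl A2]
    exact glue_cutVec G V1 V2 v hinter hedges hv1 hv2 A1 A2ᶜ hm'

end ZeroSumAux2
section ZeroSumAux3

variable {V : Type}

lemma cutMonoid_snd_nonneg {W : Type} {H : SimpleGraph W}
    {p : (H.edgeSet → ℤ) × ℤ} (hp : p ∈ cutMonoid H) : 0 ≤ p.2 := by
  induction hp using AddSubmonoid.closure_induction with
  | mem x hx => obtain ⟨A, rfl⟩ := hx; norm_num
  | zero => norm_num
  | add x y hx hy ihx ihy => simpa [Prod.snd_add] using add_nonneg ihx ihy

lemma cutMonoid_eq_zero {W : Type} {H : SimpleGraph W}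
    {p : (H.edgeSet → ℤ) × ℤ} (hp : p ∈ cutMonoid H) (h0 : p.2 = 0) : p = 0 := by
  induction hp using AddSubmonoid.closure_induction with
  | mem x hx => obtain ⟨A, rfl⟩ := hx; norm_num at h0
  | zero => rfl
  | add x y hx hy ihx ihy =>
    have h1 := cutMonoid_snd_nonneg hx
    have h2 := cutMonoid_snd_nonneg hy
    rw [Prod.snd_add] at h0
    have hx0 : x.2 = 0 := by omega
    have hy0 : y.2 = 0 := by omega
    rw [ihx hx0, ihy hy0, add_zero]

lemma cutMonoid_split {W : Type} {H : SimpleGraph W}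
    {p : (H.edgeSet → ℤ) × ℤ} (hp : p ∈ cutMonoid H) :
    ∀ a b : ℤ, 0 ≤ a → 0 ≤ b → p.2 = a + b →
    ∃ p1 p2, p1 ∈ cutMonoid H ∧ p2 ∈ cutMonoid H ∧ p1.2 = a ∧ p2.2 = b ∧ p = p1 + p2 := by
  induction hp using AddSubmonoid.closure_induction with
  | mem x hx =>
    intro a b ha hb hab
    obtain ⟨A, rfl⟩ := hx
    simp only at hab
    rcases (show (a = 0 ∧ b = 1) ∨ (a = 1 ∧ b = 0) by omega) with ⟨rfl, rfl⟩ | ⟨rfl, rfl⟩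
    · exact ⟨0, _, AddSubmonoid.zero_mem _,
        AddSubmonoid.subset_closure ⟨A, rfl⟩, rfl, rfl, (zero_add _).symm⟩
    · exact ⟨_, 0, AddSubmonoid.subset_closure ⟨A, rfl⟩,
        AddSubmonoid.zero_mem _, rfl, rfl, (add_zero _).symm⟩
  | zero =>
    intro a b ha hb hab
    simp only [Prod.snd_zero] at hab
    obtain rfl : a = 0 := by omega
    obtain rfl : b = 0 := by omega
    exact ⟨0, 0, AddSubmonoid.zero_mem _, AddSubmonoid.zero_mem _, rfl, rfl, (add_zero _).symm⟩
  | add x y hx hy ihx ihy =>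
    intro a b ha hb hab
    have hxn := cutMonoid_snd_nonneg hx
    have hyn := cutMonoid_snd_nonneg hy
    have hab' : x.2 + y.2 = a + b := by rw [← Prod.snd_add]; exact hab.symm ▸ rfl
    by_cases hcase : a ≤ x.2
    · obtain ⟨x1, x2, hx1, hx2, hx1s, hx2s, hxe⟩ :=
        ihx a (x.2 - a) ha (by omega) (by omega)
      refine ⟨x1, x2 + y, hx1, AddSubmonoid.add_mem _ hx2 hy, hx1s, ?_, ?_⟩
      · rw [Prod.snd_add]; omega
      · rw [hxe, add_assoc]
    · obtain ⟨y1, y2, hy1, hy2, hy1s, hy2s, hye⟩ :=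
        ihy (a - x.2) b (by omega) hb (by omega)
      refine ⟨x + y1, y2, AddSubmonoid.add_mem _ hx hy1, hy2, ?_, hy2s, ?_⟩
      · rw [Prod.snd_add]; omega
      · rw [hye, add_assoc]

lemma cutMonoid_restrict (G : SimpleGraph V) (s : Set V)
    {p : (G.edgeSet → ℤ) × ℤ} (hp : p ∈ cutMonoid G) :
    ((restrictCut G s p.1, p.2) : ((G.induce s).edgeSet → ℤ) × ℤ) ∈ cutMonoid (G.induce s) := by
  induction hp using AddSubmonoid.closure_induction with
  | mem x hx =>
    obtain ⟨A, rfl⟩ := hx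
    apply AddSubmonoid.subset_closure
    refine ⟨(Subtype.val ⁻¹' A : Set ↥s), ?_⟩
    refine Prod.ext ?_ rfl
    funext e
    exact cutVec_preimage s A e.1
  | zero =>
    have : restrictCut G s (0 : (G.edgeSet → ℤ) × ℤ).1 = 0 := rfl
    rw [this]
    exact AddSubmonoid.zero_mem _
  | add x y hx hy ihx ihy =>
    have : ((restrictCut G s (x + y).1, (x + y).2) : ((G.induce s).edgeSet → ℤ) × ℤ)
        = (restrictCut G s x.1, x.2) + (restrictCut G s y.1, y.2) := by
      refine Prod.ext ?_ rfl
      funext e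
      rfl
    rw [this]
    exact AddSubmonoid.add_mem _ ihx ihy

lemma glue_smul_mem (G : SimpleGraph V) (V1 V2 : Set V) (v : V) (hinter : V1 ∩ V2 = {v})
    (hedges : ∀ a b, G.Adj a b → ((a ∈ V1 ∧ b ∈ V1) ∨ (a ∈ V2 ∧ b ∈ V2)))
    (hv1 : v ∈ V1) (hv2 : v ∈ V2)
    {p2 : ((G.induce V2).edgeSet → ℤ) × ℤ} (hp2 : p2 ∈ cutMonoid (G.induce V2)) :
    ∀ A1 : Set ↥V1,
      ((glueFun G V1 V2 (fun e => p2.2 * cutVec A1 e.1) p2.1, p2.2) :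
        (G.edgeSet → ℤ) × ℤ) ∈ cutMonoid G := by
  induction hp2 using AddSubmonoid.closure_induction with
  | mem x hx =>
    intro A1
    obtain ⟨A2, rfl⟩ := hx
    obtain ⟨A, hA⟩ := glue_gen G V1 V2 v hinter hedges hv1 hv2 A1 A2
    have h1 : (fun e : (G.induce V1).edgeSet => (1 : ℤ) * cutVec A1 e.1)
        = fun e => cutVec A1 e.1 := by funext e; rw [one_mul]
    apply AddSubmonoid.subset_closure
    exact ⟨A, by rw [← hA, h1]⟩
  | zero =>
    intro A1
    have h1 : (fun e : (G.induce V1).edgeSet =>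
        ((0 : ((G.induce V2).edgeSet → ℤ) × ℤ)).2 * cutVec A1 e.1)
        = (0 : (G.induce V1).edgeSet → ℤ) := by funext e; simp
    have : ((glueFun G V1 V2 (fun e => ((0 : ((G.induce V2).edgeSet → ℤ) × ℤ)).2 * cutVec A1 e.1)
        ((0 : ((G.induce V2).edgeSet → ℤ) × ℤ)).1, ((0 : ((G.induce V2).edgeSet → ℤ) × ℤ)).2) :
        (G.edgeSet → ℤ) × ℤ) = 0 := by
      rw [h1]
      exact Prod.ext (glue_zero G V1 V2) rfl
    rw [this]
    exact AddSubmonoid.zero_mem _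
  | add x y hx hy ihx ihy =>
    intro A1
    have key : ((glueFun G V1 V2 (fun e => (x + y).2 * cutVec A1 e.1) (x + y).1, (x + y).2) :
        (G.edgeSet → ℤ) × ℤ)
        = (glueFun G V1 V2 (fun e => x.2 * cutVec A1 e.1) x.1, x.2)
          + (glueFun G V1 V2 (fun e => y.2 * cutVec A1 e.1) y.1, y.2) := by
      have h1 : (fun e : (G.induce V1).edgeSet => (x + y).2 * cutVec A1 e.1)
          = (fun e => x.2 * cutVec A1 e.1) + (fun e => y.2 * cutVec A1 e.1) := by
        funext e; simp [Prod.snd_add, add_mul]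
      refine Prod.ext ?_ rfl
      rw [h1]
      exact glue_add G V1 V2 _ _ _ _
    rw [key]
    exact AddSubmonoid.add_mem _ (ihx A1) (ihy A1)

lemma glue_mem (G : SimpleGraph V) (V1 V2 : Set V) (v : V) (hinter : V1 ∩ V2 = {v})
    (hedges : ∀ a b, G.Adj a b → ((a ∈ V1 ∧ b ∈ V1) ∨ (a ∈ V2 ∧ b ∈ V2)))
    (hv1 : v ∈ V1) (hv2 : v ∈ V2)
    {p1 : ((G.induce V1).edgeSet → ℤ) × ℤ} (hp1 : p1 ∈ cutMonoid (G.induce V1)) :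
    ∀ y : (G.induce V2).edgeSet → ℤ, ((y, p1.2) : _ × ℤ) ∈ cutMonoid (G.induce V2) →
      ((glueFun G V1 V2 p1.1 y, p1.2) : (G.edgeSet → ℤ) × ℤ) ∈ cutMonoid G := by
  induction hp1 using AddSubmonoid.closure_induction with
  | mem x hx =>
    intro y hy
    obtain ⟨A1, rfl⟩ := hx
    have := glue_smul_mem G V1 V2 v hinter hedges hv1 hv2 hy A1
    simpa using this
  | zero =>
    intro y hy
    have hy0 : ((y, (0 : ((G.induce V1).edgeSet → ℤ) × ℤ).2) : _ × ℤ) = 0 :=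
      cutMonoid_eq_zero hy rfl
    have hyy : y = 0 := congrArg Prod.fst hy0
    rw [hyy]
    have : ((glueFun G V1 V2 (0 : ((G.induce V1).edgeSet → ℤ) × ℤ).1 (0 : (G.induce V2).edgeSet → ℤ),
        (0 : ((G.induce V1).edgeSet → ℤ) × ℤ).2) : (G.edgeSet → ℤ) × ℤ) = 0 :=
      Prod.ext (glue_zero G V1 V2) rfl
    rw [this]
    exact AddSubmonoid.zero_mem _
  | add x y' hx hy' ihx ihy' =>
    intro y hy
    have hxn := cutMonoid_snd_nonneg hx
    have hyn := cutMonoid_snd_nonneg hy'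
    obtain ⟨q1, q2, hq1, hq2, hq1s, hq2s, hqe⟩ :=
      cutMonoid_split hy x.2 y'.2 hxn hyn (by rw [Prod.snd_add])
    have hy1 : ((q1.1, x.2) : _ × ℤ) ∈ cutMonoid (G.induce V2) := by
      have : ((q1.1, x.2) : _ × ℤ) = q1 := Prod.ext rfl hq1s.symm
      rw [this]; exact hq1
    have hy2 : ((q2.1, y'.2) : _ × ℤ) ∈ cutMonoid (G.induce V2) := by
      have : ((q2.1, y'.2) : _ × ℤ) = q2 := Prod.ext rfl hq2s.symm
      rw [this]; exact hq2
    have hysum : y = q1.1 + q2.1 := congrArg Prod.fst hqe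
    have key : ((glueFun G V1 V2 (x + y').1 y, (x + y').2) : (G.edgeSet → ℤ) × ℤ)
        = (glueFun G V1 V2 x.1 q1.1, x.2) + (glueFun G V1 V2 y'.1 q2.1, y'.2) := by
      refine Prod.ext ?_ rfl
      rw [hysum]
      exact glue_add G V1 V2 _ _ _ _
    rw [key]
    exact AddSubmonoid.add_mem _ (ihx q1.1 hy1) (ihy' q2.1 hy2)

end ZeroSumAux3
section ZeroSumAux4

variable {V : Type}

lemma glue_smul (G : SimpleGraph V) (V1 V2 : Set V) (c : ℝ)
    (x : (G.induce V1).edgeSet → ℝ) (y : (G.induce V2).edgeSet → ℝ) :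
    glueFun G V1 V2 (c • x) (c • y) = c • glueFun G V1 V2 x y := by
  funext e
  simp only [glueFun, Pi.smul_apply]
  split_ifs <;> simp

lemma cutCone_snd_nonneg {W : Type} {H : SimpleGraph W}
    {p : (H.edgeSet → ℝ) × ℝ} (hp : p ∈ cutCone H) : 0 ≤ p.2 := by
  induction hp using AddSubmonoid.closure_induction with
  | mem x hx =>
    obtain ⟨c, A, hc, rfl⟩ := hx
    simpa using hc
  | zero => norm_num
  | add x y hx hy ihx ihy => simpa [Prod.snd_add] using add_nonneg ihx ihy

lemma cutCone_eq_zero {W : Type} {H : SimpleGraph W}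
    {p : (H.edgeSet → ℝ) × ℝ} (hp : p ∈ cutCone H) (h0 : p.2 = 0) : p = 0 := by
  induction hp using AddSubmonoid.closure_induction with
  | mem x hx =>
    obtain ⟨c, A, hc, rfl⟩ := hx
    simp only [Prod.smul_snd, smul_eq_mul, mul_one] at h0
    rw [h0, zero_smul]
  | zero => rfl
  | add x y hx hy ihx ihy =>
    have h1 := cutCone_snd_nonneg hx
    have h2 := cutCone_snd_nonneg hy
    rw [Prod.snd_add] at h0
    have hx0 : x.2 = 0 := by linarith
    have hy0 : y.2 = 0 := by linarith
    rw [ihx hx0, ihy hy0, add_zero]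

lemma cutCone_split {W : Type} {H : SimpleGraph W}
    {p : (H.edgeSet → ℝ) × ℝ} (hp : p ∈ cutCone H) :
    ∀ a b : ℝ, 0 ≤ a → 0 ≤ b → p.2 = a + b →
    ∃ p1 p2, p1 ∈ cutCone H ∧ p2 ∈ cutCone H ∧ p1.2 = a ∧ p2.2 = b ∧ p = p1 + p2 := by
  induction hp using AddSubmonoid.closure_induction with
  | mem x hx =>
    intro a b ha hb hab
    obtain ⟨c, A, hc, rfl⟩ := hx
    simp only [Prod.smul_snd, smul_eq_mul, mul_one] at hab
    refine ⟨a • ((fun e => ((cutVec A e.1 : ℤ) : ℝ), (1 : ℝ))),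
      b • ((fun e => ((cutVec A e.1 : ℤ) : ℝ), (1 : ℝ))), ?_, ?_, by simp, by simp, ?_⟩
    · exact AddSubmonoid.subset_closure ⟨a, A, ha, rfl⟩
    · exact AddSubmonoid.subset_closure ⟨b, A, hb, rfl⟩
    · rw [hab, add_smul]
  | zero =>
    intro a b ha hb hab
    simp only [Prod.snd_zero] at hab
    obtain rfl : a = 0 := by linarith
    obtain rfl : b = 0 := by linarith
    exact ⟨0, 0, AddSubmonoid.zero_mem _, AddSubmonoid.zero_mem _, rfl, rfl, (add_zero _).symm⟩
  | add x y hx hy ihx ihy =>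
    intro a b ha hb hab
    have hxn := cutCone_snd_nonneg hx
    have hyn := cutCone_snd_nonneg hy
    rw [Prod.snd_add] at hab
    by_cases hcase : a ≤ x.2
    · obtain ⟨x1, x2, hx1, hx2, hx1s, hx2s, hxe⟩ :=
        ihx a (x.2 - a) ha (by linarith) (by ring)
      refine ⟨x1, x2 + y, hx1, AddSubmonoid.add_mem _ hx2 hy, hx1s, ?_, ?_⟩
      · rw [Prod.snd_add]; rw [hx2s]; linarith
      · rw [hxe, add_assoc]
    · obtain ⟨y1, y2, hy1, hy2, hy1s, hy2s, hye⟩ :=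
        ihy (a - x.2) b (by linarith) hb (by linarith)
      refine ⟨x + y1, y2, AddSubmonoid.add_mem _ hx hy1, hy2, ?_, hy2s, ?_⟩
      · rw [Prod.snd_add]; rw [hy1s]; ring
      · rw [hye, add_assoc]

lemma cutCone_restrict (G : SimpleGraph V) (s : Set V)
    {p : (G.edgeSet → ℝ) × ℝ} (hp : p ∈ cutCone G) :
    ((fun e => p.1 (ιe G s e), p.2) : ((G.induce s).edgeSet → ℝ) × ℝ)
      ∈ cutCone (G.induce s) := by
  induction hp using AddSubmonoid.closure_induction with
  | mem x hx =>
    obtain ⟨c, A, hc, rfl⟩ := hx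
    apply AddSubmonoid.subset_closure
    refine ⟨c, (Subtype.val ⁻¹' A : Set ↥s), hc, ?_⟩
    refine Prod.ext ?_ (by simp)
    funext e
    simp only [Prod.smul_fst, Pi.smul_apply, smul_eq_mul]
    congr 1
    exact_mod_cast congrArg (fun (n : ℤ) => (n : ℝ)) (cutVec_preimage s A e.1)
  | zero => exact AddSubmonoid.zero_mem _
  | add x y hx hy ihx ihy =>
    have : ((fun e => (x + y).1 (ιe G s e), (x + y).2) : ((G.induce s).edgeSet → ℝ) × ℝ)
        = (fun e => x.1 (ιe G s e), x.2) + (fun e => y.1 (ιe G s e), y.2) := by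
      refine Prod.ext ?_ rfl
      funext e
      rfl
    rw [this]
    exact AddSubmonoid.add_mem _ ihx ihy

lemma rglue_smul_mem (G : SimpleGraph V) (V1 V2 : Set V) (v : V) (hinter : V1 ∩ V2 = {v})
    (hedges : ∀ a b, G.Adj a b → ((a ∈ V1 ∧ b ∈ V1) ∨ (a ∈ V2 ∧ b ∈ V2)))
    (hv1 : v ∈ V1) (hv2 : v ∈ V2)
    {p2 : ((G.induce V2).edgeSet → ℝ) × ℝ} (hp2 : p2 ∈ cutCone (G.induce V2)) :
    ∀ A1 : Set ↥V1,
      ((glueFun G V1 V2 (fun e => p2.2 * ((cutVec A1 e.1 : ℤ) : ℝ)) p2.1, p2.2) :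
        (G.edgeSet → ℝ) × ℝ) ∈ cutCone G := by
  induction hp2 using AddSubmonoid.closure_induction with
  | mem x hx =>
    intro A1
    obtain ⟨c, A2, hc, rfl⟩ := hx
    obtain ⟨A, hA⟩ := glue_gen G V1 V2 v hinter hedges hv1 hv2 A1 A2
    have hAR : glueFun G V1 V2 (fun e => ((cutVec A1 e.1 : ℤ) : ℝ))
        (fun e => ((cutVec A2 e.1 : ℤ) : ℝ)) = fun e => ((cutVec A e.1 : ℤ) : ℝ) := by
      rw [glue_cast]
      funext e
      rw [congrFun hA e]
    have key : ((glueFun G V1 V2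
        (fun e => (c • ((fun e' : (G.induce V2).edgeSet => ((cutVec A2 e'.1 : ℤ) : ℝ), (1:ℝ)))).2 *
          ((cutVec A1 e.1 : ℤ) : ℝ))
        (c • ((fun e' : (G.induce V2).edgeSet => ((cutVec A2 e'.1 : ℤ) : ℝ), (1:ℝ)))).1,
        (c • ((fun e' : (G.induce V2).edgeSet => ((cutVec A2 e'.1 : ℤ) : ℝ), (1:ℝ)))).2) : (G.edgeSet → ℝ) × ℝ)
        = c • ((fun e => ((cutVec A e.1 : ℤ) : ℝ), (1:ℝ))) := by
      refine Prod.ext ?_ (by simp)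
      have h1 : (fun e : (G.induce V1).edgeSet =>
          (c • ((fun e' : (G.induce V2).edgeSet => ((cutVec A2 e'.1 : ℤ) : ℝ), (1:ℝ)))).2 *
            ((cutVec A1 e.1 : ℤ) : ℝ))
          = c • fun e : (G.induce V1).edgeSet => ((cutVec A1 e.1 : ℤ) : ℝ) := by
        funext e
        simp [smul_eq_mul]
      rw [h1]
      have h2 : (c • ((fun e' : (G.induce V2).edgeSet => ((cutVec A2 e'.1 : ℤ) : ℝ), (1:ℝ)))).1
          = c • fun e' : (G.induce V2).edgeSet => ((cutVec A2 e'.1 : ℤ) : ℝ) := rfl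
      rw [h2, glue_smul, hAR]
      rfl
    rw [key]
    exact AddSubmonoid.subset_closure ⟨c, A, hc, rfl⟩
  | zero =>
    intro A1
    have : ((glueFun G V1 V2
        (fun e => ((0 : ((G.induce V2).edgeSet → ℝ) × ℝ)).2 * ((cutVec A1 e.1 : ℤ) : ℝ))
        ((0 : ((G.induce V2).edgeSet → ℝ) × ℝ)).1,
        ((0 : ((G.induce V2).edgeSet → ℝ) × ℝ)).2) : (G.edgeSet → ℝ) × ℝ) = 0 := by
      have h1 : (fun e : (G.induce V1).edgeSet =>
          ((0 : ((G.induce V2).edgeSet → ℝ) × ℝ)).2 * ((cutVec A1 e.1 : ℤ) : ℝ))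
          = (0 : (G.induce V1).edgeSet → ℝ) := by funext e; simp
      rw [h1]
      exact Prod.ext (glue_zero G V1 V2) rfl
    rw [this]
    exact AddSubmonoid.zero_mem _
  | add x y hx hy ihx ihy =>
    intro A1
    have key : ((glueFun G V1 V2 (fun e => (x + y).2 * ((cutVec A1 e.1 : ℤ) : ℝ)) (x + y).1,
        (x + y).2) : (G.edgeSet → ℝ) × ℝ)
        = (glueFun G V1 V2 (fun e => x.2 * ((cutVec A1 e.1 : ℤ) : ℝ)) x.1, x.2)
          + (glueFun G V1 V2 (fun e => y.2 * ((cutVec A1 e.1 : ℤ) : ℝ)) y.1, y.2) := by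
      have h1 : (fun e : (G.induce V1).edgeSet => (x + y).2 * ((cutVec A1 e.1 : ℤ) : ℝ))
          = (fun e => x.2 * ((cutVec A1 e.1 : ℤ) : ℝ))
            + (fun e => y.2 * ((cutVec A1 e.1 : ℤ) : ℝ)) := by
        funext e; simp [Prod.snd_add, add_mul]
      refine Prod.ext ?_ rfl
      rw [h1]
      exact glue_add G V1 V2 _ _ _ _
    rw [key]
    exact AddSubmonoid.add_mem _ (ihx A1) (ihy A1)

lemma rglue_mem (G : SimpleGraph V) (V1 V2 : Set V) (v : V) (hinter : V1 ∩ V2 = {v})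
    (hedges : ∀ a b, G.Adj a b → ((a ∈ V1 ∧ b ∈ V1) ∨ (a ∈ V2 ∧ b ∈ V2)))
    (hv1 : v ∈ V1) (hv2 : v ∈ V2)
    {p1 : ((G.induce V1).edgeSet → ℝ) × ℝ} (hp1 : p1 ∈ cutCone (G.induce V1)) :
    ∀ y : (G.induce V2).edgeSet → ℝ, ((y, p1.2) : _ × ℝ) ∈ cutCone (G.induce V2) →
      ((glueFun G V1 V2 p1.1 y, p1.2) : (G.edgeSet → ℝ) × ℝ) ∈ cutCone G := by
  induction hp1 using AddSubmonoid.closure_induction with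
  | mem x hx =>
    intro y hy
    obtain ⟨c, A1, hc, rfl⟩ := hx
    have := rglue_smul_mem G V1 V2 v hinter hedges hv1 hv2 hy A1
    have he : (fun e : (G.induce V1).edgeSet =>
        ((y, (c • ((fun e' : (G.induce V1).edgeSet => ((cutVec A1 e'.1 : ℤ) : ℝ), (1:ℝ)))).2) : _ × ℝ).2 *
          ((cutVec A1 e.1 : ℤ) : ℝ))
        = (c • ((fun e' : (G.induce V1).edgeSet => ((cutVec A1 e'.1 : ℤ) : ℝ), (1:ℝ)))).1 := by
      funext e
      simp [smul_eq_mul]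
    rw [he] at this
    exact this
  | zero =>
    intro y hy
    have hy0 : ((y, ((0 : ((G.induce V1).edgeSet → ℝ) × ℝ)).2) : _ × ℝ) = 0 :=
      cutCone_eq_zero hy rfl
    have hyy : y = 0 := congrArg Prod.fst hy0
    rw [hyy]
    have : ((glueFun G V1 V2 ((0 : ((G.induce V1).edgeSet → ℝ) × ℝ)).1
        (0 : (G.induce V2).edgeSet → ℝ),
        ((0 : ((G.induce V1).edgeSet → ℝ) × ℝ)).2) : (G.edgeSet → ℝ) × ℝ) = 0 :=
      Prod.ext (glue_zero G V1 V2) rfl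
    rw [this]
    exact AddSubmonoid.zero_mem _
  | add x y' hx hy' ihx ihy' =>
    intro y hy
    have hxn := cutCone_snd_nonneg hx
    have hyn := cutCone_snd_nonneg hy'
    obtain ⟨q1, q2, hq1, hq2, hq1s, hq2s, hqe⟩ :=
      cutCone_split hy x.2 y'.2 hxn hyn (by rw [Prod.snd_add])
    have hy1 : ((q1.1, x.2) : _ × ℝ) ∈ cutCone (G.induce V2) := by
      have : ((q1.1, x.2) : _ × ℝ) = q1 := Prod.ext rfl hq1s.symm
      rw [this]; exact hq1
    have hy2 : ((q2.1, y'.2) : _ × ℝ) ∈ cutCone (G.induce V2) := by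
      have : ((q2.1, y'.2) : _ × ℝ) = q2 := Prod.ext rfl hq2s.symm
      rw [this]; exact hq2
    have hysum : y = q1.1 + q2.1 := congrArg Prod.fst hqe
    have key : ((glueFun G V1 V2 (x + y').1 y, (x + y').2) : (G.edgeSet → ℝ) × ℝ)
        = (glueFun G V1 V2 x.1 q1.1, x.2) + (glueFun G V1 V2 y'.1 q2.1, y'.2) := by
      refine Prod.ext ?_ rfl
      rw [hysum]
      exact glue_add G V1 V2 _ _ _ _
    rw [key]
    exact AddSubmonoid.add_mem _ (ihx q1.1 hy1) (ihy' q2.1 hy2)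

end ZeroSumAux4
section ZeroSumAux5

variable {V : Type}

lemma isOpenMap_of_section {E F : Type*} [TopologicalSpace E] [TopologicalSpace F]
    [AddCommGroup E] [AddCommGroup F] [IsTopologicalAddGroup E] [IsTopologicalAddGroup F]
    (f : E → F) (s : F → E) (hs : Continuous s) (hs0 : s 0 = 0)
    (hf : ∀ u y, f (u + s (y - f u)) = y) : IsOpenMap f := by
  intro U hU
  rw [isOpen_iff_mem_nhds]
  rintro _ ⟨u, hu, rfl⟩
  have hcont : Continuous fun y => u + s (y - f u) := by
    exact continuous_const.add (hs.comp (continuous_id.sub continuous_const))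
  refine mem_nhds_iff.2 ⟨(fun y => u + s (y - f u)) ⁻¹' U, ?_, hU.preimage hcont, ?_⟩
  · intro y hy
    exact ⟨_, hy, hf u y⟩
  · show u + s (f u - f u) ∈ U
    rw [sub_self, hs0, add_zero]
    exact hu

lemma continuous_glue_zero (G : SimpleGraph V) (V1 V2 : Set V) :
    Continuous (fun q : ((G.induce V1).edgeSet → ℝ) × ℝ =>
      ((glueFun G V1 V2 q.1 (0 : (G.induce V2).edgeSet → ℝ), q.2) :
        (G.edgeSet → ℝ) × ℝ)) := by
  refine Continuous.prodMk ?_ continuous_snd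
  refine continuous_pi fun e => ?_
  by_cases h : ∃ e1, ιe G V1 e1 = e
  · have : (fun q : ((G.induce V1).edgeSet → ℝ) × ℝ =>
        glueFun G V1 V2 q.1 (0 : (G.induce V2).edgeSet → ℝ) e) = fun q => q.1 h.choose := by
      funext q
      simp only [glueFun, dif_pos h]
    rw [this]
    exact (continuous_apply _).comp continuous_fst
  · have : (fun q : ((G.induce V1).edgeSet → ℝ) × ℝ =>
        glueFun G V1 V2 q.1 (0 : (G.induce V2).edgeSet → ℝ) e) = fun q => 0 := by
      funext q
      simp only [glueFun, dif_neg h]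
      split_ifs <;> rfl
    rw [this]
    exact continuous_const

lemma continuous_glue_zero' (G : SimpleGraph V) (V1 V2 : Set V) :
    Continuous (fun q : ((G.induce V2).edgeSet → ℝ) × ℝ =>
      ((glueFun G V1 V2 (0 : (G.induce V1).edgeSet → ℝ) q.1, q.2) :
        (G.edgeSet → ℝ) × ℝ)) := by
  refine Continuous.prodMk ?_ continuous_snd
  refine continuous_pi fun e => ?_
  by_cases h : ∃ e1, ιe G V1 e1 = e
  · have : (fun q : ((G.induce V2).edgeSet → ℝ) × ℝ =>
        glueFun G V1 V2 (0 : (G.induce V1).edgeSet → ℝ) q.1 e) = fun q => 0 := by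
      funext q
      simp only [glueFun, dif_pos h]
      rfl
    rw [this]
    exact continuous_const
  · by_cases h2 : ∃ e2, ιe G V2 e2 = e
    · have : (fun q : ((G.induce V2).edgeSet → ℝ) × ℝ =>
          glueFun G V1 V2 (0 : (G.induce V1).edgeSet → ℝ) q.1 e) = fun q => q.1 h2.choose := by
        funext q
        simp only [glueFun, dif_neg h, dif_pos h2]
      rw [this]
      exact (continuous_apply _).comp continuous_fst
    · have : (fun q : ((G.induce V2).edgeSet → ℝ) × ℝ =>
          glueFun G V1 V2 (0 : (G.induce V1).edgeSet → ℝ) q.1 e) = fun q => 0 := by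
        funext q
        simp only [glueFun, dif_neg h, dif_neg h2]
      rw [this]
      exact continuous_const

lemma interior_restrict1 (G : SimpleGraph V) (V1 V2 : Set V) (v : V)
    (hinter : V1 ∩ V2 = {v})
    {r : (G.edgeSet → ℝ) × ℝ} (hr : r ∈ interior (cutCone G)) :
    ((fun e => r.1 (ιe G V1 e), r.2) : ((G.induce V1).edgeSet → ℝ) × ℝ)
      ∈ interior (cutCone (G.induce V1)) := by
  set f := fun q : (G.edgeSet → ℝ) × ℝ =>
    ((fun e => q.1 (ιe G V1 e), q.2) : ((G.induce V1).edgeSet → ℝ) × ℝ) with hf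
  set s := fun q : ((G.induce V1).edgeSet → ℝ) × ℝ =>
    ((glueFun G V1 V2 q.1 (0 : (G.induce V2).edgeSet → ℝ), q.2) :
      (G.edgeSet → ℝ) × ℝ) with hs
  have hopen : IsOpenMap f := by
    refine isOpenMap_of_section f s (continuous_glue_zero G V1 V2) ?_ ?_
    · rw [hs]
      simp only
      exact Prod.ext (glue_zero G V1 V2) rfl
    · intro u y
      refine Prod.ext ?_ (by simp [hf, hs])
      funext e1
      show u.1 (ιe G V1 e1) + glueFun G V1 V2 (y.1 - fun e => u.1 (ιe G V1 e))
        (0 : (G.induce V2).edgeSet → ℝ) (ιe G V1 e1) = y.1 e1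
      rw [glue_apply1]
      simp
  have hsub : f '' interior (cutCone G) ⊆ cutCone (G.induce V1) := by
    rintro _ ⟨a, ha, rfl⟩
    exact cutCone_restrict G V1 (interior_subset ha)
  exact interior_maximal hsub (hopen _ isOpen_interior) ⟨r, hr, rfl⟩

lemma interior_restrict2 (G : SimpleGraph V) (V1 V2 : Set V) (v : V)
    (hinter : V1 ∩ V2 = {v})
    {r : (G.edgeSet → ℝ) × ℝ} (hr : r ∈ interior (cutCone G)) :
    ((fun e => r.1 (ιe G V2 e), r.2) : ((G.induce V2).edgeSet → ℝ) × ℝ)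
      ∈ interior (cutCone (G.induce V2)) := by
  set f := fun q : (G.edgeSet → ℝ) × ℝ =>
    ((fun e => q.1 (ιe G V2 e), q.2) : ((G.induce V2).edgeSet → ℝ) × ℝ) with hf
  set s := fun q : ((G.induce V2).edgeSet → ℝ) × ℝ =>
    ((glueFun G V1 V2 (0 : (G.induce V1).edgeSet → ℝ) q.1, q.2) :
      (G.edgeSet → ℝ) × ℝ) with hs
  have hopen : IsOpenMap f := by
    refine isOpenMap_of_section f s (continuous_glue_zero' G V1 V2) ?_ ?_
    · rw [hs]
      simp only
      exact Prod.ext (glue_zero G V1 V2) rfl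
    · intro u y
      refine Prod.ext ?_ (by simp [hf, hs])
      funext e2
      show u.1 (ιe G V2 e2) + glueFun G V1 V2 (0 : (G.induce V1).edgeSet → ℝ)
        (y.1 - fun e => u.1 (ιe G V2 e)) (ιe G V2 e2) = y.1 e2
      rw [glue_apply2 G V1 V2 v hinter]
      simp
  have hsub : f '' interior (cutCone G) ⊆ cutCone (G.induce V2) := by
    rintro _ ⟨a, ha, rfl⟩
    exact cutCone_restrict G V2 (interior_subset ha)
  exact interior_maximal hsub (hopen _ isOpen_interior) ⟨r, hr, rfl⟩

lemma interior_glue (G : SimpleGraph V) (V1 V2 : Set V) (v : V) (hinter : V1 ∩ V2 = {v})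
    (hedges : ∀ a b, G.Adj a b → ((a ∈ V1 ∧ b ∈ V1) ∨ (a ∈ V2 ∧ b ∈ V2)))
    (hv1 : v ∈ V1) (hv2 : v ∈ V2)
    {x : (G.induce V1).edgeSet → ℝ} {y : (G.induce V2).edgeSet → ℝ} {β : ℝ}
    (hx : ((x, β) : _ × ℝ) ∈ interior (cutCone (G.induce V1)))
    (hy : ((y, β) : _ × ℝ) ∈ interior (cutCone (G.induce V2))) :
    ((glueFun G V1 V2 x y, β) : (G.edgeSet → ℝ) × ℝ) ∈ interior (cutCone G) := by
  set L := fun q : (G.edgeSet → ℝ) × ℝ =>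
    ((((fun e => q.1 (ιe G V1 e), q.2) : ((G.induce V1).edgeSet → ℝ) × ℝ),
      ((fun e => q.1 (ιe G V2 e), q.2) : ((G.induce V2).edgeSet → ℝ) × ℝ))) with hL
  have hLc : Continuous L := by
    refine Continuous.prodMk ?_ ?_
    · exact Continuous.prodMk
        (continuous_pi fun e => (continuous_apply _).comp continuous_fst) continuous_snd
    · exact Continuous.prodMk
        (continuous_pi fun e => (continuous_apply _).comp continuous_fst) continuous_snd
  have hsub : L ⁻¹' (interior (cutCone (G.induce V1) ×ˢ cutCone (G.induce V2)))
      ⊆ cutCone G := by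
    intro q hq
    have hq' := interior_subset hq
    have hq1 : ((fun e => q.1 (ιe G V1 e), q.2) : _ × ℝ) ∈ cutCone (G.induce V1) := hq'.1
    have hq2 : ((fun e => q.1 (ιe G V2 e), q.2) : _ × ℝ) ∈ cutCone (G.induce V2) := hq'.2
    have hqe : q = ((glueFun G V1 V2 (fun e => q.1 (ιe G V1 e)) (fun e => q.1 (ιe G V2 e)),
        q.2) : (G.edgeSet → ℝ) × ℝ) :=
      Prod.ext (glue_res G V1 V2 hedges q.1).symm rfl
    rw [hqe]
    exact rglue_mem G V1 V2 v hinter hedges hv1 hv2 hq1 _ hq2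
  have hO : IsOpen (L ⁻¹' (interior (cutCone (G.induce V1) ×ˢ cutCone (G.induce V2)))) :=
    isOpen_interior.preimage hLc
  have hmem : ((glueFun G V1 V2 x y, β) : (G.edgeSet → ℝ) × ℝ)
      ∈ L ⁻¹' (interior (cutCone (G.induce V1) ×ˢ cutCone (G.induce V2))) := by
    rw [Set.mem_preimage, interior_prod_eq]
    have e1 : (fun e => (glueFun G V1 V2 x y) (ιe G V1 e)) = x := by
      funext e; exact glue_apply1 G V1 V2 x y e
    have e2 : (fun e => (glueFun G V1 V2 x y) (ιe G V2 e)) = y := by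
      funext e; exact glue_apply2 G V1 V2 v hinter x y e
    constructor
    · show ((fun e => (glueFun G V1 V2 x y) (ιe G V1 e), β) : _ × ℝ) ∈ _
      rw [e1]; exact hx
    · show ((fun e => (glueFun G V1 V2 x y) (ιe G V2 e), β) : _ × ℝ) ∈ _
      rw [e2]; exact hy
  exact interior_maximal hsub hO hmem

lemma interior_add_cone {W : Type} (H : SimpleGraph W) {r m : (H.edgeSet → ℝ) × ℝ}
    (hr : r ∈ interior (cutCone H)) (hm : m ∈ cutCone H) :
    r + m ∈ interior (cutCone H) := by
  have hopen := (Homeomorph.addRight m).isOpenMap (interior (cutCone H)) isOpen_interior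
  refine interior_maximal ?_ hopen ⟨r, hr, rfl⟩
  rintro _ ⟨a, ha, rfl⟩
  exact AddSubmonoid.add_mem _ (interior_subset ha) hm

lemma toRealCut_add (G : SimpleGraph V) (p q : (G.edgeSet → ℤ) × ℤ) :
    toRealCut G (p + q) = toRealCut G p + toRealCut G q := by
  refine Prod.ext ?_ ?_
  · funext e
    show ((p.1 e + q.1 e : ℤ) : ℝ) = (p.1 e : ℝ) + (q.1 e : ℝ)
    push_cast
    ring
  · show ((p.2 + q.2 : ℤ) : ℝ) = (p.2 : ℝ) + (q.2 : ℝ)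
    push_cast
    ring

lemma toRealCut_mem (G : SimpleGraph V) {p : (G.edgeSet → ℤ) × ℤ}
    (hp : p ∈ cutMonoid G) : toRealCut G p ∈ cutCone G := by
  induction hp using AddSubmonoid.closure_induction with
  | mem x hx =>
    obtain ⟨A, rfl⟩ := hx
    apply AddSubmonoid.subset_closure
    refine ⟨1, A, zero_le_one, ?_⟩
    rw [one_smul]
    exact Prod.ext rfl (show ((1 : ℤ) : ℝ) = (1 : ℝ) by norm_num)
  | zero =>
    have : toRealCut G 0 = 0 :=
      Prod.ext (funext fun e => by norm_num [toRealCut]) (by norm_num [toRealCut])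
    rw [this]
    exact AddSubmonoid.zero_mem _
  | add x y hx hy ihx ihy =>
    rw [toRealCut_add]
    exact AddSubmonoid.add_mem _ ihx ihy

end ZeroSumAux5
section ZeroSumAux6

variable {V : Type}

lemma cutInterior_restrict1 (G : SimpleGraph V) (V1 V2 : Set V) (v : V)
    (hinter : V1 ∩ V2 = {v}) {p : (G.edgeSet → ℤ) × ℤ} (hp : p ∈ cutInterior G) :
    ((restrictCut G V1 p.1, p.2) : _ × ℤ) ∈ cutInterior (G.induce V1) := by
  obtain ⟨hm, hi⟩ := hp
  exact ⟨cutMonoid_restrict G V1 hm, interior_restrict1 G V1 V2 v hinter hi⟩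

lemma cutInterior_restrict2 (G : SimpleGraph V) (V1 V2 : Set V) (v : V)
    (hinter : V1 ∩ V2 = {v}) {p : (G.edgeSet → ℤ) × ℤ} (hp : p ∈ cutInterior G) :
    ((restrictCut G V2 p.1, p.2) : _ × ℤ) ∈ cutInterior (G.induce V2) := by
  obtain ⟨hm, hi⟩ := hp
  exact ⟨cutMonoid_restrict G V2 hm, interior_restrict2 G V1 V2 v hinter hi⟩

lemma cutInterior_glue (G : SimpleGraph V) (V1 V2 : Set V) (v : V) (hinter : V1 ∩ V2 = {v})
    (hedges : ∀ a b, G.Adj a b → ((a ∈ V1 ∧ b ∈ V1) ∨ (a ∈ V2 ∧ b ∈ V2)))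
    (hv1 : v ∈ V1) (hv2 : v ∈ V2)
    {x : (G.induce V1).edgeSet → ℤ} {y : (G.induce V2).edgeSet → ℤ} {β : ℤ}
    (hx : ((x, β) : _ × ℤ) ∈ cutInterior (G.induce V1))
    (hy : ((y, β) : _ × ℤ) ∈ cutInterior (G.induce V2)) :
    ((glueFun G V1 V2 x y, β) : (G.edgeSet → ℤ) × ℤ) ∈ cutInterior G := by
  obtain ⟨hm1, hi1⟩ := hx
  obtain ⟨hm2, hi2⟩ := hy
  constructor
  · exact glue_mem G V1 V2 v hinter hedges hv1 hv2 hm1 y hm2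
  · have hR := interior_glue G V1 V2 v hinter hedges hv1 hv2
      (x := fun e => ((x e : ℤ) : ℝ)) (y := fun e => ((y e : ℤ) : ℝ)) (β := (β : ℝ)) hi1 hi2
    have hc : toRealCut G ((glueFun G V1 V2 x y, β))
        = ((glueFun G V1 V2 (fun e => ((x e : ℤ) : ℝ)) (fun e => ((y e : ℤ) : ℝ)),
          (β : ℝ)) : (G.edgeSet → ℝ) × ℝ) := by
      refine Prod.ext ?_ rfl
      funext e
      exact (congrFun (glue_cast G V1 V2 x y) e).symm
    rw [hc]
    exact hR

lemma cutInterior_add {W : Type} (H : SimpleGraph W) {p m : (H.edgeSet → ℤ) × ℤ}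
    (hp : p ∈ cutInterior H) (hm : m ∈ cutMonoid H) : p + m ∈ cutInterior H := by
  refine ⟨AddSubmonoid.add_mem _ hp.1 hm, ?_⟩
  rw [toRealCut_add]
  exact interior_add_cone H hp.2 (toRealCut_mem H hm)

end ZeroSumAux6
/-- Generators of `int(M_G)` for a `0`-sum `G = G₁ #₀ G₂` of
`K₅`-minor-free graphs, in terms of generating systems of `int(M_{G₁})` and
`int(M_{G₂})` whose last coordinates lie in finite sets `W₁`, `W₂` of positive
integers. -/
theorem zeroSum_interior_generators {V : Type} [Fintype V] (G : SimpleGraph V)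
    (V1 V2 : Set V) (v : V)
    (hcover : V1 ∪ V2 = Set.univ) (hinter : V1 ∩ V2 = {v})
    (hedges : ∀ a b, G.Adj a b → ((a ∈ V1 ∧ b ∈ V1) ∨ (a ∈ V2 ∧ b ∈ V2)))
    (hK51 : K5Free (G.induce V1)) (hK52 : K5Free (G.induce V2))
    (W1 W2 : Finset ℕ) (hW1 : W1.Nonempty) (hW2 : W2.Nonempty)
    (hW1pos : ∀ b ∈ W1, 0 < b) (hW2pos : ∀ b ∈ W2, 0 < b)
    (S1 : Set (((G.induce V1).edgeSet → ℤ) × ℤ))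
    (S2 : Set (((G.induce V2).edgeSet → ℤ) × ℤ))
    (hS1sub : S1 ⊆ cutInterior (G.induce V1))
    (hS2sub : S2 ⊆ cutInterior (G.induce V2))
    (hS1gen : cutInterior (G.induce V1) =
      ⋃ g ∈ S1, (fun m => g + m) ''
        (cutMonoid (G.induce V1) : Set (((G.induce V1).edgeSet → ℤ) × ℤ)))
    (hS2gen : cutInterior (G.induce V2) =
      ⋃ g ∈ S2, (fun m => g + m) ''
        (cutMonoid (G.induce V2) : Set (((G.induce V2).edgeSet → ℤ) × ℤ)))
    (hS1W : ∀ g ∈ S1, ∃ b ∈ W1, g.2 = (b : ℤ))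
    (hS2W : ∀ g ∈ S2, ∃ b ∈ W2, g.2 = (b : ℤ)) :
    (∀ p ∈ cutInterior G, ∃ (q : (G.edgeSet → ℤ) × ℤ) (b : ℕ),
      b ∈ W1 ∪ W2 ∧ max (W1.min' hW1) (W2.min' hW2) ≤ b ∧ q.2 = (b : ℤ) ∧
      ((restrictCut G V1 q.1, (b : ℤ)) ∈ cutInterior (G.induce V1)) ∧
      ((restrictCut G V2 q.1, (b : ℤ)) ∈ cutInterior (G.induce V2)) ∧
      ∃ m ∈ cutMonoid G, p = q + m) ∧
    (∀ (q : (G.edgeSet → ℤ) × ℤ) (b : ℕ), b ∈ W1 ∪ W2 →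
      max (W1.min' hW1) (W2.min' hW2) ≤ b → q.2 = (b : ℤ) →
      ((restrictCut G V1 q.1, (b : ℤ)) ∈ cutInterior (G.induce V1)) →
      ((restrictCut G V2 q.1, (b : ℤ)) ∈ cutInterior (G.induce V2)) →
      q ∈ cutInterior G) := by

  have hv : v ∈ V1 ∩ V2 := by rw [hinter]; exact Set.mem_singleton v
  have hv1 : v ∈ V1 := hv.1
  have hv2 : v ∈ V2 := hv.2
  constructor
  · -- Part 1
    intro p hp
    have hp1 := cutInterior_restrict1 G V1 V2 v hinter hp
    have hp2 := cutInterior_restrict2 G V1 V2 v hinter hp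
    rw [hS1gen] at hp1
    rw [hS2gen] at hp2
    simp only [Set.mem_iUnion, Set.mem_image, SetLike.mem_coe] at hp1 hp2
    obtain ⟨g1, hg1S, m1, hm1, hre1⟩ := hp1
    obtain ⟨g2, hg2S, m2, hm2, hre2⟩ := hp2
    obtain ⟨b1, hb1W, hb1⟩ := hS1W g1 hg1S
    obtain ⟨b2, hb2W, hb2⟩ := hS2W g2 hg2S
    have hm1n := cutMonoid_snd_nonneg hm1
    have hm2n := cutMonoid_snd_nonneg hm2
    have hs1 : (b1 : ℤ) + m1.2 = p.2 := by
      have h := congrArg Prod.snd hre1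
      rw [Prod.snd_add, hb1] at h
      exact h
    have hs2 : (b2 : ℤ) + m2.2 = p.2 := by
      have h := congrArg Prod.snd hre2
      rw [Prod.snd_add, hb2] at h
      exact h
    rcases le_total b2 b1 with hb | hb
    · -- use b := b1, split m2
      have hb' : (b2 : ℤ) ≤ (b1 : ℤ) := by exact_mod_cast hb
      obtain ⟨m2a, m2b, hm2a, hm2b, hm2as, hm2bs, hm2e⟩ :=
        cutMonoid_split hm2 ((b1 : ℤ) - b2) (p.2 - b1) (by omega) (by omega) (by omega)
      set q2 : ((G.induce V2).edgeSet → ℤ) × ℤ := g2 + m2a with hq2def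
      have hq2int : q2 ∈ cutInterior (G.induce V2) :=
        cutInterior_add (G.induce V2) (hS2sub hg2S) hm2a
      have hq2snd : q2.2 = (b1 : ℤ) := by
        rw [hq2def, Prod.snd_add, hb2, hm2as]; ring
      refine ⟨(glueFun G V1 V2 g1.1 q2.1, (b1 : ℤ)), b1, Finset.mem_union_left _ hb1W,
        max_le (Finset.min'_le W1 b1 hb1W) (le_trans (Finset.min'_le W2 b2 hb2W) hb),
        rfl, ?_, ?_, ?_⟩
      · have res1 : restrictCut G V1 (glueFun G V1 V2 g1.1 q2.1) = g1.1 := by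
          rw [restrictCut_eq]
          funext e
          exact glue_apply1 G V1 V2 _ _ e
        rw [res1]
        have : ((g1.1, (b1 : ℤ)) : _ × ℤ) = g1 := Prod.ext rfl hb1.symm
        rw [this]
        exact hS1sub hg1S
      · have res2 : restrictCut G V2 (glueFun G V1 V2 g1.1 q2.1) = q2.1 := by
          rw [restrictCut_eq]
          funext e
          exact glue_apply2 G V1 V2 v hinter _ _ e
        rw [res2]
        have : ((q2.1, (b1 : ℤ)) : _ × ℤ) = q2 := Prod.ext rfl hq2snd.symm
        rw [this]
        exact hq2int
      · refine ⟨(glueFun G V1 V2 m1.1 m2b.1, p.2 - b1), ?_, ?_⟩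
        · have h1 : ((m1.1, p.2 - (b1 : ℤ)) : _ × ℤ) = m1 := Prod.ext rfl (by omega)
          have h2 : ((m2b.1, p.2 - (b1 : ℤ)) : _ × ℤ) = m2b := Prod.ext rfl hm2bs.symm
          exact glue_mem G V1 V2 v hinter hedges hv1 hv2
            (show ((m1.1, p.2 - (b1 : ℤ)) : _ × ℤ) ∈ cutMonoid (G.induce V1) by
              rw [h1]; exact hm1) m2b.1
            (show ((m2b.1, p.2 - (b1 : ℤ)) : _ × ℤ) ∈ cutMonoid (G.induce V2) by
              rw [h2]; exact hm2b)
        · refine Prod.ext ?_ ?_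
          · show p.1 = glueFun G V1 V2 g1.1 q2.1 + glueFun G V1 V2 m1.1 m2b.1
            rw [← glue_add]
            have h1 : g1.1 + m1.1 = restrictCut G V1 p.1 := congrArg Prod.fst hre1
            have h2 : q2.1 + m2b.1 = restrictCut G V2 p.1 := by
              have ha : q2.1 + m2b.1 = g2.1 + (m2a.1 + m2b.1) := by
                rw [hq2def]; show g2.1 + m2a.1 + m2b.1 = _; rw [add_assoc]
              have hbb : m2a.1 + m2b.1 = m2.1 := (congrArg Prod.fst hm2e).symm
              rw [ha, hbb]
              exact congrArg Prod.fst hre2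
            rw [h1, h2, restrictCut_eq, restrictCut_eq, glue_res G V1 V2 hedges]
          · show p.2 = (b1 : ℤ) + (p.2 - b1)
            ring
    · -- use b := b2, split m1
      have hb' : (b1 : ℤ) ≤ (b2 : ℤ) := by exact_mod_cast hb
      obtain ⟨m1a, m1b, hm1a, hm1b, hm1as, hm1bs, hm1e⟩ :=
        cutMonoid_split hm1 ((b2 : ℤ) - b1) (p.2 - b2) (by omega) (by omega) (by omega)
      set q1 : ((G.induce V1).edgeSet → ℤ) × ℤ := g1 + m1a with hq1def
      have hq1int : q1 ∈ cutInterior (G.induce V1) :=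
        cutInterior_add (G.induce V1) (hS1sub hg1S) hm1a
      have hq1snd : q1.2 = (b2 : ℤ) := by
        rw [hq1def, Prod.snd_add, hb1, hm1as]; ring
      refine ⟨(glueFun G V1 V2 q1.1 g2.1, (b2 : ℤ)), b2, Finset.mem_union_right _ hb2W,
        max_le (le_trans (Finset.min'_le W1 b1 hb1W) hb) (Finset.min'_le W2 b2 hb2W),
        rfl, ?_, ?_, ?_⟩
      · have res1 : restrictCut G V1 (glueFun G V1 V2 q1.1 g2.1) = q1.1 := by
          rw [restrictCut_eq]
          funext e
          exact glue_apply1 G V1 V2 _ _ e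
        rw [res1]
        have : ((q1.1, (b2 : ℤ)) : _ × ℤ) = q1 := Prod.ext rfl hq1snd.symm
        rw [this]
        exact hq1int
      · have res2 : restrictCut G V2 (glueFun G V1 V2 q1.1 g2.1) = g2.1 := by
          rw [restrictCut_eq]
          funext e
          exact glue_apply2 G V1 V2 v hinter _ _ e
        rw [res2]
        have : ((g2.1, (b2 : ℤ)) : _ × ℤ) = g2 := Prod.ext rfl hb2.symm
        rw [this]
        exact hS2sub hg2S
      · refine ⟨(glueFun G V1 V2 m1b.1 m2.1, p.2 - b2), ?_, ?_⟩
        · have h1 : ((m1b.1, p.2 - (b2 : ℤ)) : _ × ℤ) = m1b := Prod.ext rfl hm1bs.symm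
          have h2 : ((m2.1, p.2 - (b2 : ℤ)) : _ × ℤ) = m2 := Prod.ext rfl (by omega)
          exact glue_mem G V1 V2 v hinter hedges hv1 hv2
            (show ((m1b.1, p.2 - (b2 : ℤ)) : _ × ℤ) ∈ cutMonoid (G.induce V1) by
              rw [h1]; exact hm1b) m2.1
            (show ((m2.1, p.2 - (b2 : ℤ)) : _ × ℤ) ∈ cutMonoid (G.induce V2) by
              rw [h2]; exact hm2)
        · refine Prod.ext ?_ ?_
          · show p.1 = glueFun G V1 V2 q1.1 g2.1 + glueFun G V1 V2 m1b.1 m2.1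
            rw [← glue_add]
            have h2 : g2.1 + m2.1 = restrictCut G V2 p.1 := congrArg Prod.fst hre2
            have h1 : q1.1 + m1b.1 = restrictCut G V1 p.1 := by
              have ha : q1.1 + m1b.1 = g1.1 + (m1a.1 + m1b.1) := by
                rw [hq1def]; show g1.1 + m1a.1 + m1b.1 = _; rw [add_assoc]
              have hbb : m1a.1 + m1b.1 = m1.1 := (congrArg Prod.fst hm1e).symm
              rw [ha, hbb]
              exact congrArg Prod.fst hre1
            rw [h1, h2, restrictCut_eq, restrictCut_eq, glue_res G V1 V2 hedges]
          · show p.2 = (b2 : ℤ) + (p.2 - b2)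
            ring
  · -- Part 2
    intro q b hbW hbmax hq2 h1 h2
    have hqe : q = ((glueFun G V1 V2 (restrictCut G V1 q.1) (restrictCut G V2 q.1), q.2) :
        (G.edgeSet → ℤ) × ℤ) := by
      refine Prod.ext ?_ rfl
      rw [restrictCut_eq, restrictCut_eq, glue_res G V1 V2 hedges]
    rw [hqe, hq2]
    exact cutInterior_glue G V1 V2 v hinter hedges hv1 hv2 h1 h2
end

section
/- Let G be a graph whose cut monoid M_G is normal. Then the element (2, …, 2, 4) of ℤ^E × ℤ (all edge-coordinates equal to 2, last coordinate 4) lies in int(M_G); in particular m(G) ≤ 4. (This is the content of the lower bound reg K[G] ≥ |E| − 3 for normal cut algebras.) -/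
variable {V : Type}

/-! ### Auxiliary lemmas for `normal_lower_bound` -/

open Classical in
lemma cutVec_mk (A : Set V) (x y : V) :
    cutVec A s(x, y) = if ((x ∈ A) ↔ (y ∈ A)) then 0 else 1 := by
  simp [cutVec]

lemma cutVec_empty (z : Sym2 V) : cutVec (∅ : Set V) z = 0 := by
  induction z using Sym2.ind with
  | _ x y => simp [cutVec_mk]

open Classical in
lemma cutVec_key {u v x y : V} (huv : u ≠ v) (hxy : x ≠ y) :
    cutVec {u} s(x, y) + cutVec {v} s(x, y) - cutVec ({u, v} : Set V) s(x, y)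
      = if s(x, y) = s(u, v) then 2 else 0 := by
  simp only [cutVec_mk, Set.mem_singleton_iff, Set.mem_insert_iff, Sym2.eq_iff]
  by_cases h1 : x = u <;> by_cases h2 : x = v <;> by_cases h3 : y = u <;> by_cases h4 : y = v <;>
    simp_all

lemma cutVec_count [Fintype V] {x y : V} (hxy : x ≠ y) :
    2 * (∑ s : Finset V, cutVec (↑s : Set V) s(x, y)) = 2 ^ Fintype.card V := by
  classical
  have hinv : Function.Involutive (fun s : Finset V => symmDiff s {x}) :=
    fun s => symmDiff_symmDiff_cancel_right (a := ({x} : Finset V)) (b := s)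
  have hswap : (∑ s : Finset V, cutVec (↑(symmDiff s {x}) : Set V) s(x, y))
      = ∑ s : Finset V, cutVec (↑s : Set V) s(x, y) :=
    Fintype.sum_bijective _ hinv.bijective _ _ (fun s => rfl)
  have hpair : ∀ s : Finset V, cutVec (↑s : Set V) s(x, y)
      + cutVec (↑(symmDiff s {x}) : Set V) s(x, y) = 1 := by
    intro s
    by_cases hx : x ∈ s <;> by_cases hy : y ∈ s <;>
      simp [cutVec_mk, Set.mem_symmDiff, Set.mem_singleton_iff, hx, hy, hxy, Ne.symm hxy]
  have hsum : (∑ s : Finset V, cutVec (↑s : Set V) s(x, y))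
      + (∑ s : Finset V, cutVec (↑(symmDiff s {x}) : Set V) s(x, y))
      = ∑ _s : Finset V, (1 : ℤ) := by
    rw [← Finset.sum_add_distrib]
    exact Finset.sum_congr rfl fun s _ => hpair s
  rw [hswap] at hsum
  have hcard : (∑ _s : Finset V, (1 : ℤ)) = 2 ^ Fintype.card V := by
    simp [Finset.card_univ, Fintype.card_finset]
  rw [hcard] at hsum
  linarith

/-- The generator `(δ_A, 1)` as an element of `ℤ^E × ℤ`. -/
noncomputable def cutGenZ (G : SimpleGraph V) (A : Set V) : (G.edgeSet → ℤ) × ℤ :=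
  (fun e => cutVec A e.1, 1)

lemma sum_gen_mem [Fintype V] (G : SimpleGraph V) :
    (∑ s : Finset V, cutGenZ G ↑s) ∈ cutMonoid G :=
  AddSubmonoid.sum_mem _ fun s _ => AddSubmonoid.subset_closure ⟨↑s, rfl⟩

lemma cutVec_count_edge [Fintype V] (G : SimpleGraph V) (e : G.edgeSet) :
    2 * (∑ s : Finset V, cutVec (↑s : Set V) e.1) = 2 ^ Fintype.card V := by
  obtain ⟨z, hz⟩ := e
  induction z using Sym2.ind with
  | _ x y => exact cutVec_count ((G.mem_edgeSet.mp hz).ne)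

lemma four_smul_sum [Fintype V] (G : SimpleGraph V) :
    (4 : ℕ) • (∑ s : Finset V, cutGenZ G ↑s)
      = 2 ^ Fintype.card V • (((fun _ => 2, 4) : (G.edgeSet → ℤ) × ℤ)) := by
  classical
  refine Prod.ext ?_ ?_
  · funext e
    have h2 := cutVec_count_edge G e
    simp only [Prod.smul_fst, Prod.fst_sum, Pi.smul_apply, Finset.sum_apply, cutGenZ]
    simp only [nsmul_eq_mul]
    push_cast
    linarith
  · simp only [Prod.smul_snd, Prod.snd_sum, cutGenZ]
    simp only [Finset.sum_const, Finset.card_univ, Fintype.card_finset, nsmul_eq_mul]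
    push_cast
    ring

lemma two_four_mem_group [Fintype V] (G : SimpleGraph V) :
    (((fun _ => 2, 4) : (G.edgeSet → ℤ) × ℤ)) ∈ cutGroup G := by
  classical
  haveI : Fintype G.edgeSet := Fintype.ofFinite _
  have hgen : ∀ A : Set V, cutGenZ G A ∈ cutGroup G := fun A => AddSubgroup.subset_closure ⟨A, rfl⟩
  have hchi : ∀ f : G.edgeSet,
      (((fun e' => if e' = f then (2:ℤ) else 0), 0) : (G.edgeSet → ℤ) × ℤ) ∈ cutGroup G := by
    rintro ⟨z, hz⟩
    induction z using Sym2.ind with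
    | _ x y =>
      have hxy := (G.mem_edgeSet.mp hz).ne
      have key : (((fun e' => if e' = (⟨s(x, y), hz⟩ : G.edgeSet) then (2:ℤ) else 0), 0)
            : (G.edgeSet → ℤ) × ℤ)
          = cutGenZ G {x} + cutGenZ G {y} - cutGenZ G {x, y} - cutGenZ G ∅ := by
        refine Prod.ext ?_ (by simp [cutGenZ])
        funext e'
        obtain ⟨z', hz'⟩ := e'
        induction z' using Sym2.ind with
        | _ a b =>
          have hab := (G.mem_edgeSet.mp hz').ne
          have h := cutVec_key (u := x) (v := y) hxy hab
          simp only [cutGenZ, Prod.fst_add, Prod.fst_sub, Pi.add_apply, Pi.sub_apply,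
            cutVec_empty, Subtype.mk.injEq]
          rw [sub_zero]
          exact h.symm
      rw [key]
      exact sub_mem (sub_mem (add_mem (hgen _) (hgen _)) (hgen _)) (hgen _)
  have hdecomp : (((fun _ => 2, 4) : (G.edgeSet → ℤ) × ℤ))
      = (∑ f : G.edgeSet, (((fun e' => if e' = f then (2:ℤ) else 0), 0) : (G.edgeSet → ℤ) × ℤ))
        + 4 • cutGenZ G ∅ := by
    refine Prod.ext ?_ ?_
    · funext e'
      simp [Prod.fst_sum, Finset.sum_apply, cutGenZ, cutVec_empty, Finset.sum_ite_eq,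
        Finset.sum_ite_eq']
    · simp [Prod.snd_sum, cutGenZ]
  rw [hdecomp]
  exact add_mem (AddSubgroup.sum_mem _ fun f _ => hchi f) (AddSubgroup.nsmul_mem _ (hgen ∅) 4)

/-- The generator `(δ_A, 1)` as an element of `ℝ^E × ℝ`. -/
noncomputable def cutGenR (G : SimpleGraph V) (A : Set V) : (G.edgeSet → ℝ) × ℝ :=
  (fun e => ((cutVec A e.1 : ℤ) : ℝ), 1)

open Classical in
lemma cutVec_keyR {u v x y : V} (huv : u ≠ v) (hxy : x ≠ y) :
    ((cutVec {u} s(x, y) : ℤ) : ℝ) + ((cutVec {v} s(x, y) : ℤ) : ℝ)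
      - ((cutVec ({u, v} : Set V) s(x, y) : ℤ) : ℝ)
      = if s(x, y) = s(u, v) then 2 else 0 := by
  have h := cutVec_key (u := u) (v := v) huv hxy
  split_ifs with hc
  · have h2 : cutVec {u} s(x, y) + cutVec {v} s(x, y) - cutVec ({u, v} : Set V) s(x, y) = 2 := by
      rw [h, if_pos hc]
    exact_mod_cast h2
  · have h2 : cutVec {u} s(x, y) + cutVec {v} s(x, y) - cutVec ({u, v} : Set V) s(x, y) = 0 := by
      rw [h, if_neg hc]
    exact_mod_cast h2

lemma interior_mem [Fintype V] (G : SimpleGraph V) :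
    toRealCut G ((fun _ => 2, 4) : (G.edgeSet → ℤ) × ℤ) ∈ interior (cutCone G) := by
  classical
  haveI : Fintype G.edgeSet := Fintype.ofFinite _
  set n := Fintype.card V with hn
  set T : (Finset V → ℝ) →ₗ[ℝ] ((G.edgeSet → ℝ) × ℝ) :=
    Fintype.linearCombination ℝ (fun s : Finset V => cutGenR G ↑s) with hTdef
  have hTapp : ∀ c : Finset V → ℝ, T c = ∑ s : Finset V, c s • cutGenR G ↑s := fun c => rfl
  have hgen : ∀ s : Finset V, cutGenR G ↑s ∈ LinearMap.range T := by
    intro s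
    refine ⟨Pi.single s 1, ?_⟩
    rw [hTapp]
    simp [Pi.single_apply, ite_smul, Finset.sum_ite_eq, Finset.sum_ite_eq']
  have h0eq : cutGenR G (↑(∅ : Finset V)) = ((0, 1) : (G.edgeSet → ℝ) × ℝ) := by
    refine Prod.ext ?_ rfl
    funext e
    simp [cutGenR, cutVec_empty]
  have h0 : ((0, 1) : (G.edgeSet → ℝ) × ℝ) ∈ LinearMap.range T := h0eq ▸ hgen ∅
  have hchi : ∀ f : G.edgeSet,
      (((fun e' => if e' = f then (1:ℝ) else 0), 0) : (G.edgeSet → ℝ) × ℝ)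
        ∈ LinearMap.range T := by
    rintro ⟨z, hz⟩
    induction z using Sym2.ind with
    | _ x y =>
      have hxy := (G.mem_edgeSet.mp hz).ne
      have key : (((fun e' => if e' = (⟨s(x, y), hz⟩ : G.edgeSet) then (1:ℝ) else 0), 0)
            : (G.edgeSet → ℝ) × ℝ)
          = (2⁻¹ : ℝ) • (cutGenR G {x} + cutGenR G {y} - cutGenR G {x, y}
              - ((0, 1) : (G.edgeSet → ℝ) × ℝ)) := by
        refine Prod.ext ?_ (by norm_num [cutGenR])
        funext e'
        obtain ⟨z', hz'⟩ := e'
        induction z' using Sym2.ind with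
        | _ a b =>
          have hab := (G.mem_edgeSet.mp hz').ne
          have h := cutVec_keyR (u := x) (v := y) hxy hab
          simp only [cutGenR, Prod.smul_fst, Prod.fst_add, Prod.fst_sub, Pi.smul_apply,
            Pi.add_apply, Pi.sub_apply, Subtype.mk.injEq, Pi.zero_apply, smul_eq_mul]
          rw [sub_zero, h]
          split_ifs <;> norm_num
      have hx' : cutGenR G {x} ∈ LinearMap.range T := by
        rw [← Finset.coe_singleton]; exact hgen {x}
      have hy' : cutGenR G {y} ∈ LinearMap.range T := by
        rw [← Finset.coe_singleton]; exact hgen {y}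
      have hxy' : cutGenR G {x, y} ∈ LinearMap.range T := by
        have := hgen {x, y}
        rwa [Finset.coe_insert, Finset.coe_singleton] at this
      rw [key]
      exact Submodule.smul_mem _ _ (sub_mem (sub_mem (add_mem hx' hy') hxy') h0)
  have hsurj : Function.Surjective T := by
    rw [← LinearMap.range_eq_top, eq_top_iff]
    rintro ⟨x, a⟩ -
    have hdecomp : ((x, a) : (G.edgeSet → ℝ) × ℝ)
        = (∑ f : G.edgeSet,
            x f • (((fun e' => if e' = f then (1:ℝ) else 0), 0) : (G.edgeSet → ℝ) × ℝ))
          + a • ((0, 1) : (G.edgeSet → ℝ) × ℝ) := by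
      refine Prod.ext ?_ ?_
      · funext e'
        simp [Prod.fst_sum, Finset.sum_apply, mul_ite, Finset.sum_ite_eq, Finset.sum_ite_eq']
      · simp [Prod.snd_sum]
    rw [hdecomp]
    exact add_mem (Submodule.sum_mem _ fun f _ => Submodule.smul_mem _ _ (hchi f))
      (Submodule.smul_mem _ _ h0)
  have hopen : IsOpenMap T := LinearMap.isOpenMap_of_finiteDimensional T hsurj
  have hUopen : IsOpen {c : Finset V → ℝ | ∀ s, 0 < c s} := by
    have hU : {c : Finset V → ℝ | ∀ s, 0 < c s} = ⋂ s, {c : Finset V → ℝ | 0 < c s} := by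
      ext c; simp [Set.mem_iInter]
    rw [hU]
    exact isOpen_iInter_of_finite fun s => isOpen_lt continuous_const (continuous_apply s)
  have hsub : T '' {c : Finset V → ℝ | ∀ s, 0 < c s} ⊆ cutCone G := by
    rintro _ ⟨c, hc, rfl⟩
    rw [hTapp]
    exact AddSubmonoid.sum_mem _ fun s _ => AddSubmonoid.subset_closure ⟨c s, ↑s, (hc s).le, rfl⟩
  have hmem : toRealCut G ((fun _ => 2, 4) : (G.edgeSet → ℤ) × ℤ)
      ∈ T '' {c : Finset V → ℝ | ∀ s, 0 < c s} := by
    have hne : (2 : ℝ) ^ n ≠ 0 := by positivity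
    refine ⟨fun _ => 4 / 2 ^ n, fun s => by positivity, ?_⟩
    rw [hTapp]
    refine Prod.ext ?_ ?_
    · funext e
      have h2 := cutVec_count_edge G e
      have h2R : 2 * (∑ s : Finset V, ((cutVec (↑s : Set V) e.1 : ℤ) : ℝ)) = 2 ^ n := by
        rw [hn]
        exact_mod_cast h2
      simp only [Prod.fst_sum, Finset.sum_apply, Prod.smul_fst, Pi.smul_apply, smul_eq_mul,
        cutGenR, toRealCut]
      rw [← Finset.mul_sum]
      push_cast
      field_simp
      linarith
    · simp only [Prod.snd_sum, Prod.smul_snd, smul_eq_mul, cutGenR, toRealCut,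
        Finset.sum_const, Finset.card_univ, Fintype.card_finset, nsmul_eq_mul, mul_one]
      push_cast
      field_simp
      rw [hn]
  exact interior_maximal hsub (hopen _ hUopen) hmem

/-- If the cut monoid of `G` is normal, then `(2,…,2,4)` lies in
`int(M_G)`; in particular `m(G) ≤ 4`. -/
theorem normal_lower_bound {V : Type} [Fintype V] (G : SimpleGraph V)
    (hnorm : CutNormal G) :
    (((fun _ => 2, 4) : (G.edgeSet → ℤ) × ℤ) ∈ cutInterior G) ∧
    sInf (cutDegrees G) ≤ 4 := by
  classical
  have hM : (((fun _ => 2, 4) : (G.edgeSet → ℤ) × ℤ)) ∈ cutMonoid G := by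
    refine hnorm _ (two_four_mem_group G) ⟨2 ^ Fintype.card V, Nat.one_le_two_pow, ?_⟩
    rw [← four_smul_sum G]
    exact AddSubmonoid.nsmul_mem _ (sum_gen_mem G) 4
  have hint := interior_mem G
  refine ⟨⟨hM, hint⟩, Nat.sInf_le ?_⟩
  refine ⟨fun _ => 2, ?_⟩
  have h4 : ((4 : ℕ) : ℤ) = 4 := by norm_num
  rw [h4]
  exact ⟨hM, hint⟩
end

section
/- Let G = C_{2n+1} be a cycle of odd length 2n+1 ≥ 5 with edges e_1, …, e_{2n+1} in cyclic order. Then the element of ℤ^E × ℤ whose e_1-coordinate is 2, whose other edge-coordinates are all 1, and whose last coordinate is 3 lies in int(M_G), and m(G) = 3. (Equivalently, reg K[C_{2n+1}] = |E| − 2.) -/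
variable {V : Type}

namespace CutAux

open SimpleGraph

open Classical in
lemma cutVec_mk {V : Type} (A : Set V) (a b : V) :
    cutVec A s(a, b) = if ((a ∈ A) ↔ (b ∈ A)) then 0 else 1 := rfl

lemma cutVec_nonneg {V : Type} (A : Set V) (e : Sym2 V) : 0 ≤ cutVec A e := by
  induction e using Sym2.ind with
  | _ a b => rw [cutVec_mk]; split_ifs <;> simp

lemma cutVec_le_one {V : Type} (A : Set V) (e : Sym2 V) : cutVec A e ≤ 1 := by
  induction e using Sym2.ind with
  | _ a b => rw [cutVec_mk]; split_ifs <;> simp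

lemma empty_eval {V : Type} (e : Sym2 V) : cutVec (∅ : Set V) e = 0 := by
  induction e using Sym2.ind with
  | _ a b => rw [cutVec_mk]; simp

section FinM

variable {m : ℕ} [NeZero m]

lemma val_one_of (hm : 3 ≤ m) : (1 : Fin m).val = 1 := by
  rw [Fin.val_one']; exact Nat.mod_eq_of_lt (by omega)

lemma val_succ (hm : 3 ≤ m) (i : Fin m) : (i + 1).val = (i.val + 1) % m := by
  rw [Fin.val_add, val_one_of hm]

lemma val_succ' (hm : 3 ≤ m) (i : Fin m) :
    (i + 1).val = i.val + 1 ∨ (i.val = m - 1 ∧ (i + 1).val = 0) := by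
  rw [val_succ hm]
  have := i.isLt
  rcases Nat.lt_or_ge (i.val + 1) m with h | h
  · left; exact Nat.mod_eq_of_lt h
  · right
    have h1 : i.val + 1 = m := by omega
    exact ⟨by omega, by rw [h1, Nat.mod_self]⟩

lemma edge_mem (hm : 3 ≤ m) (i : Fin m) : s(i, i+1) ∈ (cycleGraph m).edgeSet := by
  rw [SimpleGraph.mem_edgeSet, cycleGraph_adj']
  right
  rw [add_sub_cancel_left, val_one_of hm]

lemma edge_surj (hm : 3 ≤ m) (e : Sym2 (Fin m)) (he : e ∈ (cycleGraph m).edgeSet) :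
    ∃ i : Fin m, e = s(i, i+1) := by
  induction e using Sym2.ind with
  | _ u v =>
    rw [SimpleGraph.mem_edgeSet, cycleGraph_adj'] at he
    rcases he with h | h
    · refine ⟨v, ?_⟩
      have h2 : u - v = 1 := Fin.ext (by rw [val_one_of hm]; exact h)
      have h3 : u = v + 1 := by rw [← h2]; abel
      rw [h3]
      exact Sym2.eq_swap
    · refine ⟨u, ?_⟩
      have h2 : v - u = 1 := Fin.ext (by rw [val_one_of hm]; exact h)
      have h3 : v = u + 1 := by rw [← h2]; abel
      rw [h3]

lemma edge_inj (hm : 3 ≤ m) {i j : Fin m} (h : s(i, i+1) = s(j, j+1)) : i = j := by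
  rw [Sym2.eq_iff] at h
  rcases h with ⟨h, _⟩ | ⟨h1, h2⟩
  · exact h
  · exfalso
    have h3 : i = i + 1 + 1 := by rw [h2, ← h1]
    have h4 : i + 0 = i + (1 + 1) := by rw [add_zero]; nth_rewrite 1 [h3]; abel
    have h5 : (0 : Fin m) = 1 + 1 := add_left_cancel h4
    have h6 := congrArg Fin.val h5
    rw [val_succ hm, val_one_of hm, Fin.val_zero, Nat.mod_eq_of_lt (by omega)] at h6
    omega

/-- The cut set realizing the pair of edges `{s(0,1), s(k,k+1)}`. -/
def pairSet (k : Fin m) : Set (Fin m) := {v | 1 ≤ v.val ∧ v.val ≤ k.val}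

/-- The cut set realizing the complement of the edge `s(k,k+1)` (for odd `m`). -/
def coSet (k : Fin m) : Set (Fin m) :=
  {v | (if v.val ≤ k.val then v.val else v.val + 1) % 2 = 0}

lemma pair_eval (hm : 3 ≤ m) (k i : Fin m) (hk : k ≠ 0) :
    cutVec (pairSet k) s(i, i+1) =
      (if i = 0 then 1 else 0) + (if i = k then 1 else 0) := by
  rw [cutVec_mk]
  have h1 := i.isLt
  have h2 := k.isLt
  have h3 : k.val ≠ 0 := fun h => hk (Fin.ext (by simpa using h))
  have h4 := val_succ' hm i
  simp only [pairSet, Set.mem_setOf_eq, Fin.ext_iff, Fin.val_zero]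
  split_ifs <;> omega

lemma co_eval (hm : 3 ≤ m) (hodd : m % 2 = 1) (k i : Fin m) :
    cutVec (coSet k) s(i, i+1) = 1 - (if i = k then 1 else 0) := by
  rw [cutVec_mk]
  have h1 := i.isLt
  have h2 := k.isLt
  have h4 := val_succ' hm i
  simp only [coSet, Set.mem_setOf_eq, Fin.ext_iff]
  split_ifs <;> omega

/-- The `i`-th edge of the cycle. -/
noncomputable def eIdx (hm : 3 ≤ m) (i : Fin m) : (cycleGraph m).edgeSet :=
  ⟨s(i, i+1), edge_mem hm i⟩

lemma eIdx_inj (hm : 3 ≤ m) : Function.Injective (eIdx (m := m) hm) :=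
  fun _ _ h => edge_inj hm (Subtype.ext_iff.mp h)

lemma eIdx_bij (hm : 3 ≤ m) : Function.Bijective (eIdx (m := m) hm) :=
  ⟨eIdx_inj hm, fun e => by
    obtain ⟨i, hi⟩ := edge_surj hm e.1 e.2
    exact ⟨i, Subtype.ext hi.symm⟩⟩

/-- The generators over `ℤ`. -/
noncomputable def gZ (A : Set (Fin m)) : ((cycleGraph m).edgeSet → ℤ) × ℤ :=
  ((fun e => cutVec A e.1), 1)

/-- The generators over `ℝ`. -/
noncomputable def gR (A : Set (Fin m)) : ((cycleGraph m).edgeSet → ℝ) × ℝ :=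
  ((fun e => ((cutVec A e.1 : ℤ) : ℝ)), 1)

open Classical in
/-- Basis-like vectors. -/
noncomputable def XX (hm : 3 ≤ m) (i : Fin m) : ((cycleGraph m).edgeSet → ℝ) × ℝ :=
  (Pi.single (eIdx hm i) 1, 0)

/-- The all-ones edge vector. -/
noncomputable def oneV (m : ℕ) : ((cycleGraph m).edgeSet → ℝ) × ℝ := ((fun _ => 1), 0)

/-- The vertical vector. -/
noncomputable def zV (m : ℕ) : ((cycleGraph m).edgeSet → ℝ) × ℝ := (0, 1)

lemma gR_empty : gR (∅ : Set (Fin m)) = zV m := by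
  refine Prod.ext ?_ rfl
  funext e
  show ((cutVec ∅ (e : Sym2 (Fin m)) : ℤ) : ℝ) = (0 : (cycleGraph m).edgeSet → ℝ) e
  rw [empty_eval]
  norm_num

lemma XX_eval (hm : 3 ≤ m) (i j : Fin m) :
    (XX hm i).1 (eIdx hm j) = if j = i then 1 else 0 := by
  simp only [XX]
  rw [Pi.single_apply]
  exact if_congr (eIdx_inj hm).eq_iff rfl rfl

lemma gR_eval (A : Set (Fin m)) (hm : 3 ≤ m) (i : Fin m) :
    (gR A).1 (eIdx hm i) = ((cutVec A s(i, i+1) : ℤ) : ℝ) := rfl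

lemma idP (hm : 3 ≤ m) (k : Fin m) (hk : k ≠ 0) :
    gR (pairSet k) = XX hm 0 + XX hm k + zV m := by
  refine Prod.ext ?_ ?_
  · funext e
    obtain ⟨j, hj⟩ := (eIdx_bij hm).2 e
    subst hj
    rw [show ((XX hm 0 + XX hm k + zV m).1) (eIdx hm j)
        = (XX hm 0).1 (eIdx hm j) + (XX hm k).1 (eIdx hm j) + (zV m).1 (eIdx hm j) from rfl]
    rw [gR_eval _ hm j, pair_eval hm k j hk, XX_eval, XX_eval]
    show _ = _ + _ + (0:ℝ)
    push_cast
    split_ifs <;> norm_num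
  · show (1:ℝ) = 0 + 0 + 1
    norm_num

lemma idC (hm : 3 ≤ m) (hodd : m % 2 = 1) (k : Fin m) :
    gR (coSet k) = oneV m + zV m - XX hm k := by
  refine Prod.ext ?_ ?_
  · funext e
    obtain ⟨j, hj⟩ := (eIdx_bij hm).2 e
    subst hj
    rw [show ((oneV m + zV m - XX hm k).1) (eIdx hm j)
        = (oneV m).1 (eIdx hm j) + (zV m).1 (eIdx hm j) - (XX hm k).1 (eIdx hm j) from rfl]
    rw [gR_eval _ hm j, co_eval hm hodd k j, XX_eval]
    show _ = (1:ℝ) + 0 - _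
    push_cast
    split_ifs <;> norm_num
  · show (1:ℝ) = 0 + 1 - 0
    norm_num

lemma hOne (hm : 3 ≤ m) : ∑ i : Fin m, XX hm i = oneV m := by
  classical
  refine Prod.ext ?_ ?_
  · funext e
    obtain ⟨j, hj⟩ := (eIdx_bij hm).2 e
    subst hj
    rw [Prod.fst_sum, Finset.sum_apply]
    rw [Finset.sum_congr rfl (fun i _ => XX_eval hm i j)]
    rw [Fintype.sum_ite_eq j (fun _ => (1:ℝ))]
    rfl
  · rw [Prod.snd_sum]
    simp [XX, oneV]

lemma sum_split {M : Type} [AddCommMonoid M] (f : Fin m → M) :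
    ∑ i, f i = f 0 + ∑ k : {x : Fin m // x ≠ 0}, f k.1 := by
  rw [← Finset.add_sum_erase _ f (Finset.mem_univ (0 : Fin m))]
  congr 1
  exact Finset.sum_subtype _ (fun x => by simp) f

lemma card_sub_ne : Fintype.card {x : Fin m // x ≠ 0} = m - 1 := by
  rw [Fintype.card_subtype_compl, Fintype.card_subtype_eq, Fintype.card_fin]

lemma sum_sub_XX (hm : 3 ≤ m) :
    ∑ k : {x : Fin m // x ≠ 0}, XX hm k.1 = oneV m - XX hm 0 := by
  have h := sum_split (m := m) (XX hm)
  rw [hOne hm] at h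
  exact eq_sub_of_add_eq' h.symm

lemma card_edge (hm : 3 ≤ m) : Fintype.card (cycleGraph m).edgeSet = m := by
  rw [← Fintype.card_of_bijective (eIdx_bij hm), Fintype.card_fin]

lemma even_cut (hm : 3 ≤ m) (A : Set (Fin m)) :
    Even (∑ e : (cycleGraph m).edgeSet, cutVec A e.1) := by
  classical
  have hb : ∑ e : (cycleGraph m).edgeSet, cutVec A e.1
      = ∑ i : Fin m, cutVec A s(i, i+1) :=
    (Fintype.sum_bijective (eIdx hm) (eIdx_bij hm) _ _ (fun i => rfl)).symm
  set f : Fin m → ℤ := fun v => if v ∈ A then 1 else 0 with hf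
  have hstep : ∀ i : Fin m, cutVec A s(i, i+1) = f i + f (i+1) - 2 * (f i * f (i+1)) := by
    intro i
    rw [cutVec_mk, hf]
    by_cases h1 : i ∈ A <;> by_cases h2 : (i+1) ∈ A <;> simp [h1, h2]
  have hshift : ∑ i : Fin m, f (i + 1) = ∑ i : Fin m, f i :=
    Fintype.sum_equiv (Equiv.addRight (1 : Fin m)) _ _ (fun i => rfl)
  rw [hb, Finset.sum_congr rfl (fun i _ => hstep i), Finset.sum_sub_distrib,
    Finset.sum_add_distrib, hshift, ← Finset.mul_sum]
  exact ⟨∑ i : Fin m, f i - ∑ i : Fin m, f i * f (i+1), by ring⟩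

lemma even_on_monoid (hm : 3 ≤ m) {p : ((cycleGraph m).edgeSet → ℤ) × ℤ}
    (hp : p ∈ cutMonoid (cycleGraph m)) :
    Even (∑ e : (cycleGraph m).edgeSet, p.1 e) := by
  induction hp using AddSubmonoid.closure_induction with
  | mem x hx =>
    obtain ⟨A, rfl⟩ := hx
    exact even_cut hm A
  | zero => simp
  | add x y _ _ hx hy =>
    rw [show (x + y).1 = x.1 + y.1 from rfl]
    rw [Finset.sum_congr rfl (fun e _ => show (x.1 + y.1) e = x.1 e + y.1 e from rfl),
      Finset.sum_add_distrib]
    exact hx.add hy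


/-- The generating family used for the interior certificate. -/
noncomputable def gg (m : ℕ) [NeZero m] :
    (({k : Fin m // k ≠ 0} ⊕ {k : Fin m // k ≠ 0}) ⊕ Unit) →
      ((cycleGraph m).edgeSet → ℝ) × ℝ
  | .inl (.inl k) => gR (pairSet k.1)
  | .inl (.inr k) => gR (coSet k.1)
  | .inr _ => gR ∅

lemma hueq (hm : 3 ≤ m) :
    ∑ k : {x : Fin m // x ≠ 0}, (XX hm 0 + XX hm k.1 + zV m)
      = (((m-1 : ℕ)) : ℝ) • XX hm 0 + (oneV m - XX hm 0) + (((m-1 : ℕ)) : ℝ) • zV m := by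
  rw [Finset.sum_add_distrib, Finset.sum_add_distrib, Finset.sum_const, Finset.sum_const,
    sum_sub_XX hm, Finset.card_univ, card_sub_ne]
  simp only [← Nat.cast_smul_eq_nsmul ℝ]

lemma hweq (hm : 3 ≤ m) :
    ∑ k : {x : Fin m // x ≠ 0}, (oneV m + zV m - XX hm k.1)
      = ((((m-1 : ℕ)) : ℝ) • oneV m + (((m-1 : ℕ)) : ℝ) • zV m) - (oneV m - XX hm 0) := by
  rw [Finset.sum_sub_distrib, Finset.sum_add_distrib, Finset.sum_const, Finset.sum_const,
    sum_sub_XX hm, Finset.card_univ, card_sub_ne]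
  simp only [← Nat.cast_smul_eq_nsmul ℝ]

lemma span_top (hm : 3 ≤ m) (hm5 : 5 ≤ m) (hodd : m % 2 = 1) :
    Submodule.span ℝ (Set.range (gg m)) = ⊤ := by
  set P := Submodule.span ℝ (Set.range (gg m)) with hP
  have hz : zV m ∈ P := by
    rw [← gR_empty]
    exact Submodule.subset_span ⟨.inr (), rfl⟩
  have hPp : ∀ k : Fin m, k ≠ 0 → XX hm 0 + XX hm k + zV m ∈ P := by
    intro k hk
    rw [← idP hm k hk]
    exact Submodule.subset_span ⟨.inl (.inl ⟨k, hk⟩), rfl⟩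
  have hPc : ∀ k : Fin m, k ≠ 0 → oneV m + zV m - XX hm k ∈ P := by
    intro k hk
    rw [← idC hm hodd k]
    exact Submodule.subset_span ⟨.inl (.inr ⟨k, hk⟩), rfl⟩
  have hu : ∑ k : {x : Fin m // x ≠ 0}, (XX hm 0 + XX hm k.1 + zV m) ∈ P :=
    Submodule.sum_mem _ (fun k _ => hPp k.1 k.2)
  have hw : ∑ k : {x : Fin m // x ≠ 0}, (oneV m + zV m - XX hm k.1) ∈ P :=
    Submodule.sum_mem _ (fun k _ => hPc k.1 k.2)
  set c : ℝ := (((m-1 : ℕ)) : ℝ) with hc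
  have hc4 : (4 : ℝ) ≤ c := by
    rw [hc]
    have : (4 : ℕ) ≤ m - 1 := by omega
    exact_mod_cast this
  have hne : ((c-1)^2 - 1) ≠ 0 := by nlinarith
  have hX0 : XX hm 0 ∈ P := by
    have h1 : ((c-1)^2 - 1) • XX hm 0
        = (c-1) • (∑ k : {x : Fin m // x ≠ 0}, (XX hm 0 + XX hm k.1 + zV m))
          - (∑ k : {x : Fin m // x ≠ 0}, (oneV m + zV m - XX hm k.1))
          - (c*(c-2)) • zV m := by
      rw [hueq hm, hweq hm, ← hc]
      module
    have h2 := P.smul_mem ((c-1)^2 - 1)⁻¹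
      (sub_mem (sub_mem (P.smul_mem (c-1) hu) hw) (P.smul_mem (c*(c-2)) hz))
    rwa [← h1, smul_smul, inv_mul_cancel₀ hne, one_smul] at h2
  have hone : oneV m ∈ P := by
    have h2 : oneV m = (∑ k : {x : Fin m // x ≠ 0}, (XX hm 0 + XX hm k.1 + zV m))
        - (c-1) • XX hm 0 - c • zV m := by
      rw [hueq hm, ← hc]
      module
    rw [h2]
    exact sub_mem (sub_mem hu (P.smul_mem _ hX0)) (P.smul_mem _ hz)
  have hXk : ∀ i : Fin m, XX hm i ∈ P := by
    intro i
    by_cases hi : i = 0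
    · subst hi; exact hX0
    · have h3 : XX hm i = (XX hm 0 + XX hm i + zV m) - XX hm 0 - zV m := by abel
      rw [h3]
      exact sub_mem (sub_mem (hPp i hi) hX0) hz
  rw [eq_top_iff]
  rintro p -
  have hdecomp : p = (∑ i : Fin m, p.1 (eIdx hm i) • XX hm i) + p.2 • zV m := by
    refine Prod.ext ?_ ?_
    · funext e
      obtain ⟨j, rfl⟩ := (eIdx_bij hm).2 e
      rw [show ((∑ i : Fin m, p.1 (eIdx hm i) • XX hm i) + p.2 • zV m).1
          = (∑ i : Fin m, p.1 (eIdx hm i) • XX hm i).1 + (p.2 • zV m).1 from rfl]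
      rw [Prod.fst_sum]
      rw [show ((∑ i : Fin m, (p.1 (eIdx hm i) • XX hm i).1) + (p.2 • zV m).1) (eIdx hm j)
          = (∑ i : Fin m, (p.1 (eIdx hm i) • XX hm i).1) (eIdx hm j)
            + ((p.2 • zV m).1) (eIdx hm j) from rfl]
      rw [Finset.sum_apply]
      have hterm : ∀ i : Fin m, ((p.1 (eIdx hm i) • XX hm i).1) (eIdx hm j)
          = if j = i then p.1 (eIdx hm i) else 0 := by
        intro i
        rw [show ((p.1 (eIdx hm i) • XX hm i).1) (eIdx hm j)
            = p.1 (eIdx hm i) * (XX hm i).1 (eIdx hm j) from rfl, XX_eval]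
        split_ifs <;> ring
      rw [Finset.sum_congr rfl (fun i _ => hterm i), Fintype.sum_ite_eq j]
      show p.1 (eIdx hm j) = p.1 (eIdx hm j) + p.2 * 0
      ring
    · show p.2 = (∑ i : Fin m, p.1 (eIdx hm i) • XX hm i).2 + (p.2 • zV m).2
      rw [Prod.snd_sum]
      have : ∀ i : Fin m, (p.1 (eIdx hm i) • XX hm i).2 = 0 := by
        intro i
        show p.1 (eIdx hm i) * (0:ℝ) = 0
        ring
      rw [Finset.sum_congr rfl (fun i _ => this i), Finset.sum_const, smul_zero]
      show p.2 = 0 + p.2 * 1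
      ring
  rw [hdecomp]
  exact add_mem (Submodule.sum_mem _ fun i _ => P.smul_mem _ (hXk i)) (P.smul_mem _ hz)

noncomputable def cf (m : ℕ) [NeZero m] (a : ℝ) :
    (({k : Fin m // k ≠ 0} ⊕ {k : Fin m // k ≠ 0}) ⊕ Unit) → ℝ
  | .inl _ => a
  | .inr _ => 1

lemma cf_pos (a : ℝ) (ha : 0 < a) (i : (({k : Fin m // k ≠ 0} ⊕ {k : Fin m // k ≠ 0}) ⊕ Unit)) :
    0 < cf m a i := by
  rcases i with (k|k)|u <;> simp [cf]
  · exact ha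
  · exact ha

lemma combo_eq (hm : 3 ≤ m) (hodd : m % 2 = 1) :
    ∑ i, cf m ((((m-1:ℕ)):ℝ))⁻¹ i • gg m i
      = XX hm 0 + oneV m + (3:ℝ) • zV m := by
  set c : ℝ := (((m-1 : ℕ)) : ℝ) with hc
  have hcne : c ≠ 0 := by
    rw [hc]
    exact Nat.cast_ne_zero.mpr (by omega)
  rw [Fintype.sum_sum_type, Fintype.sum_sum_type]
  have h1 : ∀ k : {x : Fin m // x ≠ 0},
      cf m c⁻¹ (Sum.inl (Sum.inl k)) • gg m (Sum.inl (Sum.inl k))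
      = c⁻¹ • (XX hm 0 + XX hm k.1 + zV m) := by
    intro k
    rw [show gg m (Sum.inl (Sum.inl k)) = gR (pairSet k.1) from rfl, idP hm k.1 k.2]
    rfl
  have h2 : ∀ k : {x : Fin m // x ≠ 0},
      cf m c⁻¹ (Sum.inl (Sum.inr k)) • gg m (Sum.inl (Sum.inr k))
      = c⁻¹ • (oneV m + zV m - XX hm k.1) := by
    intro k
    rw [show gg m (Sum.inl (Sum.inr k)) = gR (coSet k.1) from rfl, idC hm hodd k.1]
    rfl
  have h3 : ∑ x : Unit, cf m c⁻¹ (Sum.inr x) • gg m (Sum.inr x) = zV m := by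
    rw [Fintype.sum_unique]
    rw [show gg m (Sum.inr ()) = gR (∅ : Set (Fin m)) from rfl, gR_empty]
    show (1:ℝ) • zV m = zV m
    rw [one_smul]
  rw [Finset.sum_congr rfl (fun k _ => h1 k), Finset.sum_congr rfl (fun k _ => h2 k), h3,
    ← Finset.smul_sum, ← Finset.smul_sum, hueq hm, hweq hm, ← hc]
  match_scalars <;> (try field_simp) <;> norm_num

lemma target_dec (hm : 3 ≤ m) (hodd : m % 2 = 1) (h1ne : (1 : Fin m) ≠ 0)
    (E0 : Sym2 (Fin m)) (hE0 : E0 = s((0 : Fin m), 0 + 1)) :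
    (((fun e => if e.1 = E0 then (2 : ℤ) else 1), (3 : ℤ)) :
        ((cycleGraph m).edgeSet → ℤ) × ℤ)
      = gZ (pairSet 1) + gZ (coSet 1) + gZ ∅ := by
  refine Prod.ext ?_ ?_
  · funext e
    obtain ⟨j, hj⟩ := (eIdx_bij hm).2 e
    subst hj
    show (if (eIdx hm j).1 = E0 then (2:ℤ) else 1)
      = cutVec (pairSet 1) (eIdx hm j).1 + cutVec (coSet 1) (eIdx hm j).1
        + cutVec ∅ (eIdx hm j).1
    rw [hE0, show (eIdx hm j).1 = s(j, j+1) from rfl,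
      pair_eval hm 1 j h1ne, co_eval hm hodd 1 j, empty_eval]
    have hv1 : (1 : Fin m).val = 1 := val_one_of hm
    have hiff : (s(j, j+1) = s((0:Fin m), 0+1)) ↔ j = 0 :=
      ⟨fun h => edge_inj hm h, fun h => by rw [h]⟩
    simp only [hiff, Fin.ext_iff, Fin.val_zero, hv1]
    split_ifs <;> omega
  · show (3:ℤ) = 1 + 1 + 1
    norm_num

lemma target_real (hm : 3 ≤ m) (E0 : Sym2 (Fin m)) (hE0 : E0 = s((0 : Fin m), 0 + 1)) :
    toRealCut (cycleGraph m)
        (((fun e => if e.1 = E0 then (2 : ℤ) else 1), (3 : ℤ)) :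
          ((cycleGraph m).edgeSet → ℤ) × ℤ)
      = XX hm 0 + oneV m + (3:ℝ) • zV m := by
  refine Prod.ext ?_ ?_
  · funext e
    obtain ⟨j, hj⟩ := (eIdx_bij hm).2 e
    subst hj
    show (((if (eIdx hm j).1 = E0 then (2 : ℤ) else 1) : ℤ) : ℝ)
      = (XX hm 0).1 (eIdx hm j) + 1 + (3:ℝ) * 0
    rw [hE0, XX_eval hm 0 j]
    have hiff : (s(j, j+1) = s((0:Fin m), 0+1)) ↔ j = 0 :=
      ⟨fun h => edge_inj hm h, fun h => by rw [h]⟩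
    rw [show (eIdx hm j).1 = s(j, j+1) from rfl]
    simp only [hiff, Fin.ext_iff, Fin.val_zero]
    split_ifs <;> first | (exfalso; omega) | (push_cast; norm_num)
  · show ((3:ℤ):ℝ) = 0 + 0 + (3:ℝ) * 1
    norm_num

end FinM

lemma interior_of_pos_combo {E : Type} [Fintype E] {ι : Type} [Fintype ι]
    (C : Set ((E → ℝ) × ℝ)) (g : ι → (E → ℝ) × ℝ) (c : ι → ℝ)
    (hc : ∀ i, 0 < c i)
    (hspan : Submodule.span ℝ (Set.range g) = ⊤)
    (hC : ∀ d : ι → ℝ, (∀ i, 0 ≤ d i) → (∑ i, d i • g i) ∈ C) :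
    (∑ i, c i • g i) ∈ interior C := by
  classical
  let L : (ι → ℝ) →ₗ[ℝ] ((E → ℝ) × ℝ) :=
    { toFun := fun d => ∑ i, d i • g i
      map_add' := by intro a b; simp [add_smul, Finset.sum_add_distrib]
      map_smul' := by intro r a; simp [Finset.smul_sum, smul_smul] }
  have hL : ∀ d, L d = ∑ i, d i • g i := fun _ => rfl
  have hrange : ∀ i, g i ∈ LinearMap.range L := by
    intro i
    refine ⟨Pi.single i 1, ?_⟩
    rw [hL, Finset.sum_eq_single i]
    · simp
    · intro b _ hb; simp [Pi.single_apply, hb]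
    · simp
  have hsurj : Function.Surjective L := by
    rw [← LinearMap.range_eq_top, eq_top_iff, ← hspan, Submodule.span_le]
    rintro _ ⟨i, rfl⟩
    exact hrange i
  have hcont : Continuous L := LinearMap.continuous_of_finiteDimensional L
  let Lc : (ι → ℝ) →L[ℝ] ((E → ℝ) × ℝ) := ⟨L, hcont⟩
  have hLc : ∀ d, Lc d = ∑ i, d i • g i := fun _ => rfl
  have hopen : IsOpenMap Lc := ContinuousLinearMap.isOpenMap Lc hsurj
  have hU : IsOpen {d : ι → ℝ | ∀ i, 0 < d i} := by
    have h2 : {d : ι → ℝ | ∀ i, 0 < d i} = ⋂ i, (fun d : ι → ℝ => d i) ⁻¹' Set.Ioi 0 := by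
      ext d; simp [Set.mem_iInter]
    rw [h2]
    exact isOpen_iInter_of_finite fun i => isOpen_Ioi.preimage (continuous_apply i)
  refine mem_interior.mpr ⟨Lc '' {d | ∀ i, 0 < d i}, ?_, hopen _ hU, ⟨c, hc, (hLc c).symm ▸ rfl⟩⟩
  rintro _ ⟨d, hd, rfl⟩
  rw [hLc]
  exact hC d fun i => (hd i).le

lemma pos_on_interior {F : Type} [AddCommGroup F] [Module ℝ F] [TopologicalSpace F]
    [IsTopologicalAddGroup F] [ContinuousSMul ℝ F] (C : Set F) (φ : F →ₗ[ℝ] ℝ)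
    (hC : ∀ p ∈ C, 0 ≤ φ p) (z : F) (hz : φ z = 1) {p : F}
    (hp : p ∈ interior C) : 0 < φ p := by
  have cont : Continuous fun t : ℝ => p - t • z :=
    continuous_const.sub (continuous_id.smul continuous_const)
  have hpre : IsOpen ((fun t : ℝ => p - t • z) ⁻¹' interior C) := isOpen_interior.preimage cont
  have h0 : (0:ℝ) ∈ (fun t : ℝ => p - t • z) ⁻¹' interior C := by
    simp only [Set.mem_preimage, zero_smul, sub_zero]; exact hp
  obtain ⟨ε, hε, hball⟩ := Metric.isOpen_iff.mp hpre 0 h0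
  have hmem : p - (ε/2) • z ∈ C := by
    have h3 : (ε/2) ∈ Metric.ball (0:ℝ) ε := by
      rw [Metric.mem_ball, Real.dist_eq, sub_zero, abs_of_pos (by linarith)]
      linarith
    exact interior_subset (hball h3)
  have h4 := hC _ hmem
  rw [map_sub, map_smul, hz, smul_eq_mul, mul_one] at h4
  linarith

lemma nonneg_on_cutCone {V : Type} (G : SimpleGraph V) (φ : ((G.edgeSet → ℝ) × ℝ) →ₗ[ℝ] ℝ)
    (h : ∀ A : Set V, 0 ≤ φ ((fun e => ((cutVec A e.1 : ℤ) : ℝ)), 1)) :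
    ∀ p ∈ cutCone G, 0 ≤ φ p := by
  intro p hp
  induction hp using AddSubmonoid.closure_induction with
  | mem x hx =>
    obtain ⟨c, A, hc, rfl⟩ := hx
    rw [map_smul, smul_eq_mul]
    exact mul_nonneg hc (h A)
  | zero => simp
  | add x y _ _ hx hy => rw [map_add]; positivity

end CutAux

open SimpleGraph in
/-- For the odd cycle `C_{2n+1}` (`2n+1 ≥ 5`), the element with
`e₁`-coordinate `2`, all other edge-coordinates `1` and last coordinate `3` lies in
`int(M_G)`, and `m(C_{2n+1}) = 3`. -/
theorem odd_cycle_m (n : ℕ) (hn : 2 ≤ n) :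
    (((fun e => if e.1 = s((⟨0, by omega⟩ : Fin (2 * n + 1)),
          (⟨1, by omega⟩ : Fin (2 * n + 1))) then (2 : ℤ) else 1, (3 : ℤ)) :
        ((SimpleGraph.cycleGraph (2 * n + 1)).edgeSet → ℤ) × ℤ) ∈
      cutInterior (SimpleGraph.cycleGraph (2 * n + 1))) ∧
    IsLeast (cutDegrees (SimpleGraph.cycleGraph (2 * n + 1))) 3 := by
  classical
  haveI : NeZero (2*n+1) := ⟨by omega⟩
  have hm : 3 ≤ 2*n+1 := by omega
  have hm5 : 5 ≤ 2*n+1 := by omega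
  have hodd : (2*n+1) % 2 = 1 := by omega
  have h1ne : (1 : Fin (2*n+1)) ≠ 0 := by
    intro h
    have h2 := congrArg Fin.val h
    rw [CutAux.val_one_of hm, Fin.val_zero] at h2
    omega
  -- The distinguished edge.
  have hE0 : ∀ (p : (0:ℕ) < 2*n+1) (q : 1 < 2*n+1),
      s((⟨0,p⟩ : Fin (2*n+1)), ⟨1,q⟩) = s((0 : Fin (2*n+1)), 0 + 1) := by
    intro p q
    have h0 : (⟨0,p⟩ : Fin (2*n+1)) = 0 := Fin.ext (by simp)
    have h1 : (⟨1,q⟩ : Fin (2*n+1)) = 0 + 1 := Fin.ext (by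
      rw [CutAux.val_succ hm, Fin.val_zero, Nat.mod_eq_of_lt (by omega)])
    rw [h0, h1]
  -- Generic membership in `cutInterior` for the target element.
  have hmem : ∀ (E0 : Sym2 (Fin (2*n+1))), E0 = s((0 : Fin (2*n+1)), 0 + 1) →
      (((fun e => if e.1 = E0 then (2 : ℤ) else 1), (3 : ℤ)) :
        ((cycleGraph (2*n+1)).edgeSet → ℤ) × ℤ) ∈ cutInterior (cycleGraph (2*n+1)) := by
    intro E0 hE0'
    constructor
    · -- monoid membership
      rw [CutAux.target_dec hm hodd h1ne E0 hE0']
      exact add_mem (add_mem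
        (AddSubmonoid.subset_closure ⟨CutAux.pairSet 1, rfl⟩)
        (AddSubmonoid.subset_closure ⟨CutAux.coSet 1, rfl⟩))
        (AddSubmonoid.subset_closure ⟨∅, rfl⟩)
    · -- interior membership
      rw [CutAux.target_real hm E0 hE0', ← CutAux.combo_eq hm hodd]
      refine CutAux.interior_of_pos_combo _ (CutAux.gg (2*n+1))
        (CutAux.cf (2*n+1) (((((2*n+1)-1:ℕ)):ℝ))⁻¹)
        (CutAux.cf_pos _ (by
          refine inv_pos.mpr ?_
          exact_mod_cast Nat.pos_of_ne_zero (by omega)))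
        (CutAux.span_top hm hm5 hodd) ?_
      intro d hd
      refine AddSubmonoid.sum_mem _ (fun i _ => AddSubmonoid.subset_closure ?_)
      rcases i with (k|k)|u
      · exact ⟨d (Sum.inl (Sum.inl k)), CutAux.pairSet k.1, hd _, rfl⟩
      · exact ⟨d (Sum.inl (Sum.inr k)), CutAux.coSet k.1, hd _, rfl⟩
      · exact ⟨d (Sum.inr u), ∅, hd _, rfl⟩
  constructor
  · exact hmem _ (hE0 _ _)
  · constructor
    · -- 3 ∈ cutDegrees
      refine ⟨(fun e => if e.1 = s((0 : Fin (2*n+1)), 0 + 1) then (2 : ℤ) else 1), ?_⟩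
      rw [show (((3:ℕ):ℤ)) = (3:ℤ) by norm_num]
      exact hmem _ rfl
    · -- lower bound
      rintro α ⟨x, hxm, hxint⟩
      -- positivity of coordinates
      have hge : ∀ e : (cycleGraph (2*n+1)).edgeSet, 1 ≤ x e := by
        intro e
        have hφ := CutAux.pos_on_interior (cutCone (cycleGraph (2*n+1)))
          ((LinearMap.proj e).comp (LinearMap.fst ℝ _ ℝ))
          (CutAux.nonneg_on_cutCone _ _ (fun A => by
            show (0:ℝ) ≤ ((cutVec A e.1 : ℤ) : ℝ)
            exact_mod_cast CutAux.cutVec_nonneg A e.1))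
          ((Pi.single e 1, 0)) (by simp) hxint
        have hφ' : (0:ℝ) < ((x e : ℤ) : ℝ) := hφ
        have := Int.cast_pos.mp hφ'
        omega
      have hlt : ∀ e : (cycleGraph (2*n+1)).edgeSet, x e < (α : ℤ) := by
        intro e
        have hφ := CutAux.pos_on_interior (cutCone (cycleGraph (2*n+1)))
          (LinearMap.snd ℝ _ ℝ - (LinearMap.proj e).comp (LinearMap.fst ℝ _ ℝ))
          (CutAux.nonneg_on_cutCone _ _ (fun A => by
            rw [LinearMap.sub_apply]
            show (0:ℝ) ≤ 1 - ((cutVec A e.1 : ℤ) : ℝ)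
            rw [sub_nonneg]
            exact_mod_cast CutAux.cutVec_le_one A e.1))
          ((0, 1)) (by
            rw [LinearMap.sub_apply]
            show (1:ℝ) - (0 : (cycleGraph (2*n+1)).edgeSet → ℝ) e = 1
            norm_num) hxint
        rw [LinearMap.sub_apply] at hφ
        have hφ' : (0:ℝ) < ((α:ℤ) : ℝ) - ((x e : ℤ) : ℝ) := hφ
        have h2 : ((x e : ℤ) : ℝ) < ((α:ℤ) : ℝ) := by linarith
        exact_mod_cast h2
      by_contra hcon
      push_neg at hcon
      have hα2 : α = 2 := by
        have h1 := hge (CutAux.eIdx hm 0)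
        have h2 := hlt (CutAux.eIdx hm 0)
        omega
      subst hα2
      have hx1 : ∀ e : (cycleGraph (2*n+1)).edgeSet, x e = 1 := by
        intro e
        have h1 := hge e
        have h2 := hlt e
        omega
      have heven := CutAux.even_on_monoid hm hxm
      have hsum : ∑ e : (cycleGraph (2*n+1)).edgeSet, x e = ((2*n+1 : ℕ) : ℤ) := by
        rw [Finset.sum_congr rfl (fun e _ => hx1 e), Finset.sum_const, Finset.card_univ,
          CutAux.card_edge hm]
        simp
      rw [hsum] at heven
      obtain ⟨r, hr⟩ := heven
      omega
end
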